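/- arXiv:1507.03050 — 4 statements merged into one kernel-verified Lean document; each statement's English description precedes it below -/
import Mathlib

section
/- For every positive integer d, the positive orthant L^d_+ of the d-dimensional square grid has homogeneous growth with respect to the origin: for every m ≥ 0 and every nonempty subset T of the sphere S_m of radius m about the origin, the set T* of vertices of S_{m+1} adjacent to at least one vertex of T satisfies |T*| / |T| ≥ s_{m+1} / s_m ≥ 1, where s_n = |S_n|. -/
open SimpleGraph

namespace Firefighter

variable {V : Type*}

/-- The set of vertices on fire at time `n`, starting from initial fire `X0`, with fire spreading
along paths of length at most `r` avoiding the protected sets `W 1, ..., W n`. -/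
def fireSet (G : SimpleGraph V) (r : ℕ) (X0 : Set V) (W : ℕ → Set V) : ℕ → Set V
  | 0 => X0
  | n + 1 => {v | ∃ u ∈ fireSet G r X0 W n, ∃ p : G.Walk u v, p.length ≤ r ∧
      ∀ w ∈ p.support, ∀ i, 1 ≤ i → i ≤ n + 1 → w ∉ W i}

/-- `W` is an `(f, r)`-containment strategy for the initial fire `X0` in `G`. -/
def IsContainmentStrategy (G : SimpleGraph V) (r : ℕ) (f : ℕ → ℕ)
    (X0 : Set V) (W : ℕ → Set V) : Prop :=
  (∀ n, 1 ≤ n → (W n).Finite ∧ (W n).ncard ≤ f n) ∧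
  (∀ n, Disjoint (fireSet G r X0 W n) (W (n + 1))) ∧
  (∃ N, 0 < N ∧ ∀ n, N ≤ n → fireSet G r X0 W n = fireSet G r X0 W N)

/-- `G` has the `(f, r)`-containment property. -/
def HasContainmentProperty (G : SimpleGraph V) (r : ℕ) (f : ℕ → ℕ) : Prop :=
  ∀ X0 : Set V, X0.Finite → ∃ W : ℕ → Set V, IsContainmentStrategy G r f X0 W

/-- A graph is locally finite if every vertex has finitely many neighbors. -/
def LocallyFiniteGraph (G : SimpleGraph V) : Prop := ∀ v, (G.neighborSet v).Finite

/-- The ball of radius `n` about the vertex `g0` (in the combinatorial metric). -/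
def ball (G : SimpleGraph V) (g0 : V) (n : ℕ) : Set V :=
  {v | G.Reachable g0 v ∧ G.dist g0 v ≤ n}

/-- The sphere of radius `n` about the vertex `g0` (in the combinatorial metric). -/
def sphere (G : SimpleGraph V) (g0 : V) (n : ℕ) : Set V :=
  {v | G.Reachable g0 v ∧ G.dist g0 v = n}

/-- For `T` a subset of the sphere of radius `n`, `nextAdj G g0 n T` is the set `T*` of vertices
of the sphere of radius `n+1` adjacent to at least one vertex of `T`. -/
def nextAdj (G : SimpleGraph V) (g0 : V) (n : ℕ) (T : Set V) : Set V :=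
  {v ∈ sphere G g0 (n + 1) | ∃ u ∈ T, G.Adj u v}

/-- A graph has bounded degree if there is a uniform finite bound on vertex degrees. -/
def BoundedDegree (G : SimpleGraph V) : Prop :=
  ∃ D : ℕ, ∀ v, (G.neighborSet v).Finite ∧ (G.neighborSet v).ncard ≤ D

/-- Two graphs are quasi-isometric. -/
def QuasiIsometric {V' : Type*} (G : SimpleGraph V) (H : SimpleGraph V') : Prop :=
  ∃ c : ℕ, 1 ≤ c ∧ ∃ (φ : V → V') (ψ : V' → V),
    (∀ g1 g2, H.dist (φ g1) (φ g2) ≤ c * G.dist g1 g2 + c) ∧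
    (∀ h1 h2, G.dist (ψ h1) (ψ h2) ≤ c * H.dist h1 h2 + c) ∧
    (∀ g, G.dist g (ψ (φ g)) ≤ c) ∧
    (∀ h, H.dist h (φ (ψ h)) ≤ c)

/-- `f ≼ g` : there is `c > 0` with `f n ≤ c * g (c*n + c) + c` for all `n ≥ c`. -/
def Preceq (f g : ℕ → ℕ) : Prop :=
  ∃ c : ℕ, 0 < c ∧ ∀ n, c ≤ n → f n ≤ c * g (c * n + c) + c

/-- `f` and `g` have equivalent asymptotic growth. -/
def AsympEquiv (f g : ℕ → ℕ) : Prop := Preceq f g ∧ Preceq g f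

/-- The ball of radius `n` about a set `X` of vertices. -/
def ballSet (G : SimpleGraph V) (X : Set V) (n : ℕ) : Set V :=
  {v | ∃ u ∈ X, ∃ p : G.Walk u v, p.length ≤ n}

/-- `G` has homogeneous growth with respect to `g0`: for some `r`, for all `n ≥ r` and every
nonempty `T ⊆ S_n`, `|T*| / |T| ≥ s_{n+1} / s_n ≥ 1`. -/
def HomogeneousGrowth (G : SimpleGraph V) (g0 : V) : Prop :=
  ∃ r : ℕ, ∀ n, r ≤ n → ∀ T ⊆ sphere G g0 n, T.Nonempty →
    (((sphere G g0 (n + 1)).ncard : ℝ) / ((sphere G g0 n).ncard : ℝ) ≤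
      ((nextAdj G g0 n T).ncard : ℝ) / (T.ncard : ℝ)) ∧
    (1 ≤ ((sphere G g0 (n + 1)).ncard : ℝ) / ((sphere G g0 n).ncard : ℝ))

/-- The positive orthant of the d-dimensional square grid: vertices are `Fin d → ℕ`, and two
vertices are adjacent iff the sum of coordinatewise absolute differences is `1`. -/
def orthantGrid (d : ℕ) : SimpleGraph (Fin d → ℕ) where
  Adj x y := ∑ i, ((x i : ℤ) - (y i : ℤ)).natAbs = 1
  symm := by
    constructor
    intro x y h
    rw [← h]
    refine Finset.sum_congr rfl fun i _ => ?_
    rw [← Int.natAbs_neg, neg_sub]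
  loopless := by
    constructor
    intro x h
    simp at h

/-- The d-dimensional square grid `L^d`: vertices are `Fin d → ℤ`, and two vertices are adjacent
iff the sum of coordinatewise absolute differences is `1`. -/
def gridZ (d : ℕ) : SimpleGraph (Fin d → ℤ) where
  Adj x y := ∑ i, (x i - y i).natAbs = 1
  symm := by
    constructor
    intro x y h
    rw [← h]
    refine Finset.sum_congr rfl fun i _ => ?_
    rw [← Int.natAbs_neg, neg_sub]
  loopless := by
    constructor
    intro x h
    simp at h

variable {d : ℕ}

lemma adj_iff {x y : Fin d → ℕ} :
    (orthantGrid d).Adj x y ↔ ∑ i, ((x i : ℤ) - (y i : ℤ)).natAbs = 1 := Iff.rfl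

lemma adj_single (x : Fin d → ℕ) (i : Fin d) :
    (orthantGrid d).Adj x (x + Pi.single i 1) := by
  set e : Fin d → ℕ := Pi.single i 1 with he
  rw [adj_iff]
  have key : ∀ j : Fin d, ((x j : ℤ) - (((x + e) j : ℕ) : ℤ)).natAbs = e j := by
    intro j
    have h1 : (x + e) j = x j + e j := rfl
    rw [h1]
    rcases eq_or_ne j i with rfl | h
    · simp [he]
    · simp [he, Pi.single_apply, h]
  refine (Finset.sum_congr rfl fun j _ => key j).trans ?_; rw [he]
  rw [Finset.sum_pi_single']
  simp

lemma sum_le_of_adj {x y : Fin d → ℕ} (h : (orthantGrid d).Adj x y) :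
    ∑ i, y i ≤ (∑ i, x i) + 1 := by
  rw [adj_iff] at h
  have h2 : ∑ i, ((y i : ℤ) - x i) ≤ ∑ i, (((x i : ℤ) - y i).natAbs : ℤ) := by
    refine Finset.sum_le_sum fun i _ => ?_
    rw [← Int.natAbs_neg, neg_sub]
    exact Int.le_natAbs
  rw [Finset.sum_sub_distrib] at h2
  have h3 : (∑ i, (((x i : ℤ) - y i).natAbs : ℤ)) = 1 := by exact_mod_cast h
  have : (∑ i, (y i : ℤ)) ≤ (∑ i, (x i : ℤ)) + 1 := by omega
  exact_mod_cast this

lemma sum_le_length {x y : Fin d → ℕ} (p : (orthantGrid d).Walk x y) :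
    ∑ i, y i ≤ (∑ i, x i) + p.length := by
  induction p with
  | nil => simp
  | cons h q ih =>
      have := sum_le_of_adj h
      simp only [SimpleGraph.Walk.length_cons]
      omega

lemma exists_walk (x : Fin d → ℕ) :
    ∃ p : (orthantGrid d).Walk 0 x, p.length = ∑ i, x i := by
  generalize hn : ∑ i, x i = n
  induction n generalizing x with
  | zero =>
      have : x = 0 := by
        funext j
        have := Finset.sum_eq_zero_iff.mp hn
        exact this j (Finset.mem_univ j)
      subst this
      exact ⟨SimpleGraph.Walk.nil, rfl⟩
  | succ n ih =>
      have hx : ∃ i, x i ≠ 0 := by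
        by_contra hc
        push_neg at hc
        simp [hc] at hn
      obtain ⟨i, hi⟩ := hx
      set x' : Fin d → ℕ := Function.update x i (x i - 1) with hx'
      have hxi : 1 ≤ x i := Nat.one_le_iff_ne_zero.mpr hi
      have hsum' : ∑ j, x' j = n := by
        rw [hx', Finset.sum_update_of_mem (Finset.mem_univ i)]
        have : ∑ j, x j = x i + ∑ j ∈ Finset.univ \ {i}, x j := by
          rw [Finset.sum_eq_add_sum_sdiff_singleton_of_mem (Finset.mem_univ i)]
        omega
      have hxeq : x = x' + Pi.single i 1 := by
        funext j
        rcases eq_or_ne j i with rfl | h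
        · simp [hx']; omega
        · simp [hx', Function.update_of_ne h, Pi.single_apply, h]
      obtain ⟨p, hp⟩ := ih x' hsum'
      refine ⟨(p.concat (adj_single x' i)).copy rfl hxeq.symm, ?_⟩
      rw [SimpleGraph.Walk.length_copy, SimpleGraph.Walk.length_concat, hp]

lemma dist_eq (x : Fin d → ℕ) : (orthantGrid d).dist 0 x = ∑ i, x i := by
  obtain ⟨p, hp⟩ := exists_walk x
  have h1 : (orthantGrid d).dist 0 x ≤ ∑ i, x i := hp ▸ SimpleGraph.dist_le p
  have h2 : ∑ i, x i ≤ (orthantGrid d).dist 0 x := by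
    obtain ⟨q, hq⟩ := SimpleGraph.Reachable.exists_walk_length_eq_dist ⟨p⟩
    have := sum_le_length q
    simpa [hq] using this
  omega

lemma sphere_eq (m : ℕ) :
    sphere (orthantGrid d) 0 m = ↑(Finset.Nat.antidiagonalTuple d m) := by
  ext x
  simp only [sphere, Set.mem_setOf_eq, Finset.coe_sort_coe, Finset.mem_coe,
    Finset.Nat.mem_antidiagonalTuple, dist_eq]
  constructor
  · rintro ⟨-, h⟩; exact h
  · intro h; exact ⟨⟨(exists_walk x).choose⟩, h⟩


lemma inner_sum (m : ℕ) (x : Fin d → ℕ) (hx : ∑ i, x i = m) :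
    ∑ i : Fin d, (x i + 1) = m + d := by
  rw [Finset.sum_add_distrib, hx]
  simp [Finset.card_univ]

lemma countA (m : ℕ) (T A : Finset (Fin d → ℕ))
    (hT : ∀ x ∈ T, ∑ i, x i = m)
    (hA : ∀ x ∈ T, ∀ i : Fin d, x + Pi.single i 1 ∈ A)
    (hA2 : ∀ y ∈ A, ∑ i, y i = m + 1) :
    (m + d) * T.card ≤ (m + 1) * A.card := by
  classical
  set φ : (Fin d → ℕ) × Fin d → (Fin d → ℕ) × Fin d :=
    fun p => (p.1 + Pi.single p.2 1, p.2) with hφ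
  have hfφ : ∀ p : (Fin d → ℕ) × Fin d, (φ p).1 (φ p).2 = p.1 p.2 + 1 := by
    rintro ⟨x, i⟩
    show (x + (Pi.single i 1 : Fin d → ℕ)) i = x i + 1
    simp
  have hinj : ∀ p ∈ T ×ˢ Finset.univ, ∀ q ∈ T ×ˢ Finset.univ, φ p = φ q → p = q := by
    rintro ⟨x, i⟩ - ⟨x', i'⟩ - h
    simp only [hφ, Prod.mk.injEq] at h
    obtain ⟨h1, rfl⟩ := h
    exact Prod.ext (add_right_cancel h1) rfl
  have hsub : (T ×ˢ Finset.univ).image φ ⊆ A ×ˢ (Finset.univ : Finset (Fin d)) := by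
    intro q hq
    simp only [Finset.mem_image, Finset.mem_product] at hq ⊢
    obtain ⟨⟨x, i⟩, ⟨hx, -⟩, rfl⟩ := hq
    exact ⟨hA x hx i, Finset.mem_univ _⟩
  calc (m + d) * T.card = ∑ x ∈ T, (m + d) := by
        rw [Finset.sum_const, smul_eq_mul, mul_comm]
    _ = ∑ x ∈ T, ∑ i : Fin d, (x i + 1) :=
        Finset.sum_congr rfl fun x hx => (inner_sum m x (hT x hx)).symm
    _ = ∑ p ∈ T ×ˢ (Finset.univ : Finset (Fin d)), (p.1 p.2 + 1) :=
        (Finset.sum_product' T Finset.univ (fun x i => x i + 1)).symm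
    _ = ∑ p ∈ T ×ˢ (Finset.univ : Finset (Fin d)), (φ p).1 (φ p).2 :=
        Finset.sum_congr rfl fun p _ => (hfφ p).symm
    _ = ∑ q ∈ (T ×ˢ Finset.univ).image φ, q.1 q.2 :=
        (Finset.sum_image (f := fun q : (Fin d → ℕ) × Fin d => q.1 q.2) hinj).symm
    _ ≤ ∑ q ∈ A ×ˢ (Finset.univ : Finset (Fin d)), q.1 q.2 :=
        Finset.sum_le_sum_of_subset hsub
    _ = ∑ y ∈ A, ∑ i : Fin d, y i := Finset.sum_product' A Finset.univ (fun y i => y i)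
    _ = ∑ y ∈ A, (m + 1) := Finset.sum_congr rfl fun y hy => hA2 y hy
    _ = (m + 1) * A.card := by rw [Finset.sum_const, smul_eq_mul, mul_comm]

lemma countB (m : ℕ) :
    (m + 1) * (Finset.Nat.antidiagonalTuple d (m + 1)).card ≤
      (m + d) * (Finset.Nat.antidiagonalTuple d m).card := by
  classical
  set S1 := Finset.Nat.antidiagonalTuple d (m + 1) with hS1
  set S0 := Finset.Nat.antidiagonalTuple d m with hS0
  set ψ : (Fin d → ℕ) × Fin d → (Fin d → ℕ) × Fin d :=
    fun p => (Function.update p.1 p.2 (p.1 p.2 - 1), p.2) with hψ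
  set F := (S1 ×ˢ (Finset.univ : Finset (Fin d))).filter
    (fun p : (Fin d → ℕ) × Fin d => p.1 p.2 ≠ 0) with hF
  have hmemF : ∀ p ∈ F, p.1 ∈ S1 ∧ 1 ≤ p.1 p.2 := by
    intro p hp
    rw [hF, Finset.mem_filter, Finset.mem_product] at hp
    exact ⟨hp.1.1, Nat.one_le_iff_ne_zero.mpr hp.2⟩
  have hgψ : ∀ p ∈ F, (ψ p).1 (ψ p).2 + 1 = p.1 p.2 := by
    intro p hp
    have h1 : 1 ≤ p.1 p.2 := (hmemF p hp).2
    simp only [hψ, Function.update_self]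
    omega
  have hsum_upd : ∀ (y : Fin d → ℕ) (i : Fin d), 1 ≤ y i → ∑ j, y j = m + 1 →
      ∑ j, Function.update y i (y i - 1) j = m := by
    intro y i h1 h2
    rw [Finset.sum_update_of_mem (Finset.mem_univ i)]
    have : ∑ j, y j = y i + ∑ j ∈ Finset.univ \ {i}, y j :=
      Finset.sum_eq_add_sum_sdiff_singleton_of_mem (Finset.mem_univ i) y
    omega
  have hinj : ∀ p ∈ F, ∀ q ∈ F, ψ p = ψ q → p = q := by
    rintro ⟨y, i⟩ hp ⟨y', i'⟩ hq h
    have h2 : i = i' := congrArg Prod.snd h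
    subst h2
    have h1 : Function.update y i (y i - 1) = Function.update y' i (y' i - 1) :=
      congrArg Prod.fst h
    have hy : 1 ≤ y i := (hmemF _ hp).2
    have hy' : 1 ≤ y' i := (hmemF _ hq).2
    refine Prod.ext ?_ rfl
    funext j
    have hj := congrFun h1 j
    rcases eq_or_ne j i with rfl | hne
    · simp only [Function.update_self] at hj
      show y j = y' j
      omega
    · show y j = y' j
      simpa [Function.update_of_ne hne] using hj
  have hsub : F.image ψ ⊆ S0 ×ˢ (Finset.univ : Finset (Fin d)) := by
    intro q hq
    simp only [Finset.mem_image] at hq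
    obtain ⟨⟨y, i⟩, hp, rfl⟩ := hq
    obtain ⟨hy1, hy2⟩ := hmemF _ hp
    rw [Finset.mem_product]
    refine ⟨?_, Finset.mem_univ _⟩
    rw [hS0, Finset.Nat.mem_antidiagonalTuple]
    exact hsum_upd y i hy2 (by rw [hS1, Finset.Nat.mem_antidiagonalTuple] at hy1; exact hy1)
  calc (m + 1) * S1.card = ∑ y ∈ S1, (m + 1) := by
        rw [Finset.sum_const, smul_eq_mul, mul_comm]
    _ = ∑ y ∈ S1, ∑ i : Fin d, y i := Finset.sum_congr rfl fun y hy =>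
        (by rw [hS1, Finset.Nat.mem_antidiagonalTuple] at hy; exact hy.symm)
    _ = ∑ p ∈ S1 ×ˢ (Finset.univ : Finset (Fin d)), p.1 p.2 :=
        (Finset.sum_product' S1 Finset.univ (fun y i => y i)).symm
    _ = ∑ p ∈ F, p.1 p.2 := (Finset.sum_filter_ne_zero _).symm
    _ = ∑ p ∈ F, ((ψ p).1 (ψ p).2 + 1) := Finset.sum_congr rfl fun p hp => (hgψ p hp).symm
    _ = ∑ q ∈ F.image ψ, (q.1 q.2 + 1) :=
        (Finset.sum_image (f := fun q : (Fin d → ℕ) × Fin d => q.1 q.2 + 1) hinj).symm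
    _ ≤ ∑ q ∈ S0 ×ˢ (Finset.univ : Finset (Fin d)), (q.1 q.2 + 1) :=
        Finset.sum_le_sum_of_subset hsub
    _ = ∑ x ∈ S0, ∑ i : Fin d, (x i + 1) := Finset.sum_product' S0 Finset.univ (fun x i => x i + 1)
    _ = ∑ x ∈ S0, (m + d) := Finset.sum_congr rfl fun x hx =>
        inner_sum m x (by rw [hS0, Finset.Nat.mem_antidiagonalTuple] at hx; exact hx)
    _ = (m + d) * S0.card := by rw [Finset.sum_const, smul_eq_mul, mul_comm]


lemma sum_add_single (x : Fin d → ℕ) (i : Fin d) :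
    ∑ j, (x + Pi.single i 1 : Fin d → ℕ) j = (∑ j, x j) + 1 := by
  set e : Fin d → ℕ := Pi.single i 1 with he
  have h : ∀ j, (x + e) j = x j + e j := fun _ => rfl
  simp only [Pi.add_apply]
  rw [Finset.sum_add_distrib, Finset.sum_pi_single']
  simp


/-- the positive orthant of the `d`-dimensional square grid has homogeneous growth
with respect to the origin, from radius `0`: for every `m` and every nonempty `T ⊆ S_m`,
`|T*|/|T| ≥ s_{m+1}/s_m ≥ 1`. -/
theorem stmt15 (d : ℕ) (hd : 0 < d) :
    ∀ m : ℕ, ∀ T ⊆ sphere (orthantGrid d) 0 m, T.Nonempty →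
      (((sphere (orthantGrid d) 0 (m + 1)).ncard : ℝ) /
          ((sphere (orthantGrid d) 0 m).ncard : ℝ) ≤
        ((nextAdj (orthantGrid d) 0 m T).ncard : ℝ) / (T.ncard : ℝ)) ∧
      (1 ≤ ((sphere (orthantGrid d) 0 (m + 1)).ncard : ℝ) /
          ((sphere (orthantGrid d) 0 m).ncard : ℝ)) := by
  intro m T hTsub hTne
  classical
  set S0f := Finset.Nat.antidiagonalTuple d m with hS0f
  set S1f := Finset.Nat.antidiagonalTuple d (m + 1) with hS1f
  have hsph0 : sphere (orthantGrid d) 0 m = ↑S0f := sphere_eq m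
  have hsph1 : sphere (orthantGrid d) 0 (m + 1) = ↑S1f := sphere_eq (m + 1)
  have hTsub' : T ⊆ ↑S0f := hsph0 ▸ hTsub
  have hTfin : T.Finite := S0f.finite_toSet.subset hTsub'
  set Tf := hTfin.toFinset with hTf
  have hTmem : ∀ x ∈ Tf, ∑ i, x i = m := by
    intro x hx
    have h1 : x ∈ (S0f : Set (Fin d → ℕ)) := hTsub' (hTfin.mem_toFinset.mp hx)
    rw [Finset.mem_coe, hS0f, Finset.Nat.mem_antidiagonalTuple] at h1
    exact h1
  have hAsub : nextAdj (orthantGrid d) 0 m T ⊆ ↑S1f := fun y hy => hsph1 ▸ hy.1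
  have hAfin : (nextAdj (orthantGrid d) 0 m T).Finite := S1f.finite_toSet.subset hAsub
  set Af := hAfin.toFinset with hAf
  have hAmem2 : ∀ y ∈ Af, ∑ i, y i = m + 1 := by
    intro y hy
    have h1 : y ∈ (S1f : Set (Fin d → ℕ)) := hAsub (hAfin.mem_toFinset.mp hy)
    rw [Finset.mem_coe, hS1f, Finset.Nat.mem_antidiagonalTuple] at h1
    exact h1
  have hAmem : ∀ x ∈ Tf, ∀ i : Fin d, x + Pi.single i 1 ∈ Af := by
    intro x hx i
    rw [hAf, Set.Finite.mem_toFinset]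
    refine ⟨?_, x, hTfin.mem_toFinset.mp hx, adj_single x i⟩
    rw [hsph1, Finset.mem_coe, hS1f, Finset.Nat.mem_antidiagonalTuple, sum_add_single,
      hTmem x hx]
  have keyA : (m + d) * Tf.card ≤ (m + 1) * Af.card := countA m Tf Af hTmem hAmem hAmem2
  have keyC : (m + d) * S0f.card ≤ (m + 1) * S1f.card := by
    refine countA m S0f S1f ?_ ?_ ?_
    · intro x hx; rwa [hS0f, Finset.Nat.mem_antidiagonalTuple] at hx
    · intro x hx i
      rw [hS1f, Finset.Nat.mem_antidiagonalTuple, sum_add_single]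
      rw [hS0f, Finset.Nat.mem_antidiagonalTuple] at hx
      omega
    · intro y hy; rwa [hS1f, Finset.Nat.mem_antidiagonalTuple] at hy
  have keyB : (m + 1) * S1f.card ≤ (m + d) * S0f.card := countB m
  -- cardinalities
  have hTcard : T.ncard = Tf.card := Set.ncard_eq_toFinset_card T hTfin
  have hAcard : (nextAdj (orthantGrid d) 0 m T).ncard = Af.card :=
    Set.ncard_eq_toFinset_card _ hAfin
  have hs0card : (sphere (orthantGrid d) 0 m).ncard = S0f.card := by
    rw [hsph0, Set.ncard_coe_finset]
  have hs1card : (sphere (orthantGrid d) 0 (m + 1)).ncard = S1f.card := by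
    rw [hsph1, Set.ncard_coe_finset]
  -- positivity
  have hTpos : 1 ≤ Tf.card := by
    rw [Nat.one_le_iff_ne_zero, ← Nat.pos_iff_ne_zero, Finset.card_pos]
    obtain ⟨x, hx⟩ := hTne
    exact ⟨x, hTfin.mem_toFinset.mpr hx⟩
  have hApos : 1 ≤ Af.card := by
    rw [Nat.one_le_iff_ne_zero, ← Nat.pos_iff_ne_zero, Finset.card_pos]
    obtain ⟨x, hx⟩ := hTne
    exact ⟨_, hAmem x (hTfin.mem_toFinset.mpr hx) ⟨0, hd⟩⟩
  have hS0pos : 1 ≤ S0f.card := by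
    rw [Nat.one_le_iff_ne_zero, ← Nat.pos_iff_ne_zero, Finset.card_pos]
    obtain ⟨x, hx⟩ := hTne
    exact ⟨x, hTsub' hx⟩
  have hS1pos : 1 ≤ S1f.card := by
    rw [Nat.one_le_iff_ne_zero, ← Nat.pos_iff_ne_zero, Finset.card_pos]
    obtain ⟨x, hx⟩ := hTne
    exact ⟨_, (hAsub (hAfin.mem_toFinset.mp (hAmem x (hTfin.mem_toFinset.mpr hx) ⟨0, hd⟩)) : _)⟩
  -- main nat inequality : S1f.card * Tf.card ≤ Af.card * S0f.card
  have hmain : S1f.card * Tf.card ≤ Af.card * S0f.card := by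
    have hk : 0 < (m + 1) * (m + d) := by positivity
    refine Nat.le_of_mul_le_mul_left ?_ hk
    calc (m + 1) * (m + d) * (S1f.card * Tf.card)
        = ((m + 1) * S1f.card) * ((m + d) * Tf.card) := by ring
      _ ≤ ((m + d) * S0f.card) * ((m + 1) * Af.card) := Nat.mul_le_mul keyB keyA
      _ = (m + 1) * (m + d) * (Af.card * S0f.card) := by ring
  have hmono : S0f.card ≤ S1f.card := by
    have h1 : (m + 1) * S0f.card ≤ (m + 1) * S1f.card :=
      le_trans (Nat.mul_le_mul_right _ (by omega)) keyC
    exact Nat.le_of_mul_le_mul_left h1 (by omega)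
  rw [hTcard, hAcard, hs0card, hs1card]
  have h0R : (0 : ℝ) < S0f.card := by exact_mod_cast hS0pos
  have hTR : (0 : ℝ) < Tf.card := by exact_mod_cast hTpos
  constructor
  · rw [div_le_div_iff₀ h0R hTR]
    exact_mod_cast hmain
  · rw [le_div_iff₀ h0R, one_mul]
    exact_mod_cast hmono


end Firefighter
end

section
/- Let d and q be positive integers with q < d − 2 (equivalently, lim_{n→∞} n^q / n^{d−2} = 0). Then the d-dimensional square grid L^d does not satisfy the O(n^q)-containment property. In particular, for d ≥ 4, L^d does not satisfy the O(n^{d−3})-containment property. -/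
open SimpleGraph

namespace Firefighter

variable {V : Type*}

namespace FFaux

open Finset NNReal


lemma pow_succ_le (n s : ℕ) : (s + 1) ^ n ≤ s ^ n + n * (s + 1) ^ (n - 1) := by
  induction n with
  | zero => simp
  | succ n ih =>
    calc (s + 1) ^ (n + 1) = (s + 1) ^ n * (s + 1) := by rw [pow_succ]
      _ ≤ (s ^ n + n * (s + 1) ^ (n - 1)) * (s + 1) := Nat.mul_le_mul_right _ ih
      _ = s ^ n * s + s ^ n + n * ((s + 1) ^ (n - 1) * (s + 1)) := by ring
      _ ≤ s ^ (n + 1) + (s + 1) ^ n + n * (s + 1) ^ n := by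
          have h1 : s ^ n * s = s ^ (n + 1) := by rw [pow_succ]
          have h2 : s ^ n ≤ (s + 1) ^ n := Nat.pow_le_pow_left (by omega) n
          have h4 : n * ((s + 1) ^ (n - 1) * (s + 1)) ≤ n * (s + 1) ^ n := by
            cases n with
            | zero => simp
            | succ k =>
              have hk : k + 1 - 1 = k := by omega
              rw [hk, ← pow_succ]
          omega
      _ = s ^ (n + 1) + (n + 1) * (s + 1) ^ n := by ring
      _ = s ^ (n + 1) + (n + 1) * (s + 1) ^ (n + 1 - 1) := by norm_num

lemma binom_bound {d s : ℕ} (hs : 1 ≤ s) :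
    (s + 1) ^ d ≤ s ^ d + d * 2 ^ (d - 1) * s ^ (d - 1) := by
  have h1 := pow_succ_le d s
  have h2 : (s + 1) ^ (d - 1) ≤ 2 ^ (d - 1) * s ^ (d - 1) := by
    calc (s + 1) ^ (d - 1) ≤ (2 * s) ^ (d - 1) := Nat.pow_le_pow_left (by omega) _
      _ = 2 ^ (d - 1) * s ^ (d - 1) := mul_pow 2 s (d - 1)
  calc (s + 1) ^ d ≤ s ^ d + d * (s + 1) ^ (d - 1) := h1
    _ ≤ s ^ d + d * (2 ^ (d - 1) * s ^ (d - 1)) := by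
        exact Nat.add_le_add_left (Nat.mul_le_mul_left d h2) _
    _ = s ^ d + d * 2 ^ (d - 1) * s ^ (d - 1) := by ring


/-- Generalized Hölder inequality in root form over `ℝ≥0`. -/
lemma holder_root {ι τ : Type*} (A : Finset ι) (T : Finset τ) (hA : A.Nonempty)
    (f : ι → τ → ℝ≥0) :
    ∑ t ∈ T, ∏ i ∈ A, (f i t) ^ ((A.card : ℝ)⁻¹) ≤
      ∏ i ∈ A, (∑ t ∈ T, f i t) ^ ((A.card : ℝ)⁻¹) := by
  have hA0 : A.card ≠ 0 := Finset.card_ne_zero.mpr hA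
  have hcard : (A.card : ℝ) ≠ 0 := Nat.cast_ne_zero.mpr hA0
  have hcard' : ((A.card : ℝ≥0)) ≠ 0 := Nat.cast_ne_zero.mpr hA0
  by_cases hzero : ∃ i ∈ A, (∑ t ∈ T, f i t) = 0
  · obtain ⟨i0, hi0, hS0⟩ := hzero
    have hf0 : ∀ t ∈ T, f i0 t = 0 := fun t ht => (Finset.sum_eq_zero_iff.mp hS0) t ht
    have : ∑ t ∈ T, ∏ i ∈ A, (f i t) ^ ((A.card : ℝ)⁻¹) = 0 := by
      refine Finset.sum_eq_zero fun t ht => ?_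
      refine Finset.prod_eq_zero hi0 ?_
      rw [hf0 t ht, NNReal.zero_rpow (inv_ne_zero hcard)]
    rw [this]; exact zero_le
  · push_neg at hzero
    set S : ι → ℝ≥0 := fun i => ∑ t ∈ T, f i t with hS
    set C : ℝ≥0 := ∏ i ∈ A, (S i) ^ ((A.card : ℝ)⁻¹) with hC
    have hCne : C ≠ 0 := by
      rw [hC]
      refine Finset.prod_ne_zero_iff.mpr fun i hi => ?_
      simp [NNReal.rpow_eq_zero_iff, hzero i hi]
      intro h; exact absurd h (hzero i hi)
    have hcoe : ∀ i : ι, (((A.card : ℝ≥0))⁻¹ : ℝ) = ((A.card : ℝ))⁻¹ := by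
      intro _; push_cast; ring
    have key : ∀ t ∈ T, ∏ i ∈ A, (f i t / S i) ^ ((A.card : ℝ)⁻¹) ≤
        ∑ i ∈ A, ((A.card : ℝ≥0))⁻¹ * (f i t / S i) := by
      intro t _
      have h := NNReal.geom_mean_le_arith_mean_weighted A
        (fun _ => ((A.card : ℝ≥0))⁻¹) (fun i => f i t / S i)
        (by rw [Finset.sum_const, nsmul_eq_mul, mul_inv_cancel₀ hcard'])
      calc ∏ i ∈ A, (f i t / S i) ^ ((A.card : ℝ)⁻¹)
          = ∏ i ∈ A, (f i t / S i) ^ ((((A.card : ℝ≥0))⁻¹ : ℝ)) := by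
            exact Finset.prod_congr rfl fun i _ => by rw [hcoe i]
        _ ≤ _ := h
    have hsum : ∑ t ∈ T, ∏ i ∈ A, (f i t / S i) ^ ((A.card : ℝ)⁻¹) ≤ 1 := by
      calc ∑ t ∈ T, ∏ i ∈ A, (f i t / S i) ^ ((A.card : ℝ)⁻¹)
          ≤ ∑ t ∈ T, ∑ i ∈ A, ((A.card : ℝ≥0))⁻¹ * (f i t / S i) :=
            Finset.sum_le_sum key
        _ = ∑ i ∈ A, ((A.card : ℝ≥0))⁻¹ * ((∑ t ∈ T, f i t) / S i) := by
            rw [Finset.sum_comm]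
            refine Finset.sum_congr rfl fun i _ => ?_
            rw [← Finset.mul_sum, ← Finset.sum_div]
        _ = ∑ i ∈ A, ((A.card : ℝ≥0))⁻¹ := by
            refine Finset.sum_congr rfl fun i hi => ?_
            have : (∑ t ∈ T, f i t) / S i = 1 := div_self (hzero i hi)
            rw [this, mul_one]
        _ = 1 := by rw [Finset.sum_const, nsmul_eq_mul, mul_inv_cancel₀ hcard']
    have hrw : ∀ t, ∏ i ∈ A, (f i t / S i) ^ ((A.card : ℝ)⁻¹) =
        (∏ i ∈ A, (f i t) ^ ((A.card : ℝ)⁻¹)) / C := by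
      intro t
      rw [hC, ← Finset.prod_div_distrib]
      exact Finset.prod_congr rfl fun i _ => NNReal.div_rpow _ _ _
    have hfin : (∑ t ∈ T, ∏ i ∈ A, (f i t) ^ ((A.card : ℝ)⁻¹)) / C ≤ 1 := by
      rw [Finset.sum_div]
      calc ∑ t ∈ T, (∏ i ∈ A, (f i t) ^ ((A.card : ℝ)⁻¹)) / C
          = ∑ t ∈ T, ∏ i ∈ A, (f i t / S i) ^ ((A.card : ℝ)⁻¹) :=
            Finset.sum_congr rfl fun t _ => (hrw t).symm
        _ ≤ 1 := hsum
    have hCpos : 0 < C := pos_iff_ne_zero.mpr hCne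
    have := (div_le_iff₀ hCpos).mp hfin
    simpa using this


/-- Discrete Loomis–Whitney inequality. -/
lemma loomis_whitney {d : ℕ} (A : Finset (Fin d)) :
    ∀ (S : Finset ((Fin d) → ℤ)), S.Nonempty →
    S.card ^ (A.card - 1) ≤ ∏ i ∈ A, (S.image fun x => Function.update x i 0).card := by
  induction A using Finset.strongInduction with
  | _ A ih =>
    intro S hS
    rcases le_or_gt A.card 1 with hle | hlt
    · have h1 : S.card ^ (A.card - 1) = 1 := by
        interval_cases h : A.card <;> simp
      rw [h1]
      refine Finset.one_le_prod' fun i hi => ?_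
      exact Finset.card_pos.mpr (hS.image _)
    · -- A.card ≥ 2
      obtain ⟨i0, hi0⟩ : A.Nonempty := Finset.card_pos.mp (by omega)
      set A' := A.erase i0 with hA'
      have hA'sub : A' ⊂ A := Finset.erase_ssubset hi0
      have hkcard : A'.card = A.card - 1 := Finset.card_erase_of_mem hi0
      set k := A'.card with hk
      have hk1 : 1 ≤ k := by omega
      have hA'ne : A'.Nonempty := Finset.card_pos.mp (by omega)
      classical
      set T : Finset ℤ := S.image (fun x => x i0) with hT
      set St : ℤ → Finset ((Fin d) → ℤ) := fun t => S.filter (fun x => x i0 = t) with hSt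
      set M : ℕ := (S.image fun x => Function.update x i0 0).card with hM
      set p : Fin d → ℤ → ℕ := fun i t => ((St t).image fun x => Function.update x i 0).card
        with hp
      -- fiber decomposition
      have h1 : S.card = ∑ t ∈ T, (St t).card :=
        Finset.card_eq_sum_card_fiberwise (fun x hx => Finset.mem_image_of_mem _ hx)
      -- each fiber at most M
      have h2 : ∀ t ∈ T, (St t).card ≤ M := by
        intro t ht
        refine Finset.card_le_card_of_injOn (fun x => Function.update x i0 0)
          (fun x hx => Finset.mem_image_of_mem _ (Finset.mem_of_mem_filter x hx)) ?_
        intro x hx y hy hxy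
        have hxt : x i0 = t := (Finset.mem_filter.mp hx).2
        have hyt : y i0 = t := (Finset.mem_filter.mp hy).2
        funext j
        rcases eq_or_ne j i0 with rfl | hj
        · rw [hxt, hyt]
        · have := congrFun hxy j
          simpa [Function.update_of_ne hj] using this
      -- fibers nonempty
      have h3 : ∀ t ∈ T, (St t).Nonempty := by
        intro t ht
        obtain ⟨x, hx, hxt⟩ := Finset.mem_image.mp ht
        exact ⟨x, Finset.mem_filter.mpr ⟨hx, hxt⟩⟩
      -- induction hypothesis on each fiber
      have h4 : ∀ t ∈ T, (St t).card ^ (k - 1) ≤ ∏ i ∈ A', p i t := by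
        intro t ht
        exact ih A' hA'sub (St t) (h3 t ht)
      -- sum of fiber projections bounded by total projection
      have h5 : ∀ i ∈ A', ∑ t ∈ T, p i t ≤ (S.image fun x => Function.update x i 0).card := by
        intro i hi
        have hine : i ≠ i0 := Finset.ne_of_mem_erase hi
        have hdisj : ∀ t1 ∈ T, ∀ t2 ∈ T, t1 ≠ t2 →
            Disjoint ((St t1).image fun x => Function.update x i 0)
              ((St t2).image fun x => Function.update x i 0) := by
          intro t1 _ t2 _ hne
          refine Finset.disjoint_left.mpr fun z hz1 hz2 => ?_
          obtain ⟨x, hx, rfl⟩ := Finset.mem_image.mp hz1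
          obtain ⟨y, hy, hyz⟩ := Finset.mem_image.mp hz2
          have hx1 : x i0 = t1 := (Finset.mem_filter.mp hx).2
          have hy2 : y i0 = t2 := (Finset.mem_filter.mp hy).2
          have := congrFun hyz i0
          rw [Function.update_of_ne (Ne.symm hine), Function.update_of_ne (Ne.symm hine)] at this
          exact hne (by rw [← hx1, ← hy2, this])
        calc ∑ t ∈ T, p i t
            = (T.biUnion fun t => (St t).image fun x => Function.update x i 0).card :=
              (Finset.card_biUnion hdisj).symm
          _ ≤ (S.image fun x => Function.update x i 0).card := by
              refine Finset.card_le_card (Finset.biUnion_subset.mpr fun t _ => ?_)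
              exact Finset.image_subset_image (Finset.filter_subset _ _)
      -- core NNReal computation:
      -- (∑ s_t)^k ≤ M * ∏_{i∈A'} (∑_t p i t)
      have core : S.card ^ k ≤ M * ∏ i ∈ A', (∑ t ∈ T, p i t) := by
        have hkR : ((k : ℝ)) ≠ 0 := Nat.cast_ne_zero.mpr (by omega)
        -- per fiber: s_t ≤ (M * ∏ p)^(1/k) in ℝ≥0
        have perfiber : ∀ t ∈ T, ((St t).card : ℝ≥0) ≤
            ((M : ℝ≥0) * ∏ i ∈ A', (p i t : ℝ≥0)) ^ ((k : ℝ)⁻¹) := by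
          intro t ht
          have hpow : ((St t).card : ℝ≥0) ^ (k : ℕ) ≤ (M : ℝ≥0) * ∏ i ∈ A', (p i t : ℝ≥0) := by
            have : (St t).card ^ k ≤ M * ∏ i ∈ A', p i t := by
              calc (St t).card ^ k = (St t).card * (St t).card ^ (k - 1) := by
                    rw [← pow_succ']
                    congr 1
                    omega
                _ ≤ M * ∏ i ∈ A', p i t :=
                    Nat.mul_le_mul (h2 t ht) (h4 t ht)
            calc ((St t).card : ℝ≥0) ^ (k:ℕ) = (((St t).card ^ k : ℕ) : ℝ≥0) := by push_cast; ring
              _ ≤ _ := by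
                  rw [← Nat.cast_prod]
                  exact_mod_cast this
          calc ((St t).card : ℝ≥0)
              = (((St t).card : ℝ≥0) ^ (k:ℕ)) ^ ((k : ℝ)⁻¹) := by
                rw [← NNReal.rpow_natCast _ k, ← NNReal.rpow_mul, mul_inv_cancel₀ hkR,
                  NNReal.rpow_one]
            _ ≤ _ := NNReal.rpow_le_rpow hpow (by positivity)
        -- sum over fibers
        have hsum : ((S.card : ℝ≥0)) ≤
            ((M : ℝ≥0)) ^ ((k : ℝ)⁻¹) * ∏ i ∈ A', ((∑ t ∈ T, (p i t : ℝ≥0))) ^ ((k : ℝ)⁻¹) := by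
          calc ((S.card : ℝ≥0)) = ∑ t ∈ T, ((St t).card : ℝ≥0) := by
                rw [h1]; push_cast; ring
            _ ≤ ∑ t ∈ T, ((M : ℝ≥0) * ∏ i ∈ A', (p i t : ℝ≥0)) ^ ((k : ℝ)⁻¹) :=
                Finset.sum_le_sum perfiber
            _ = ∑ t ∈ T, ((M : ℝ≥0)) ^ ((k : ℝ)⁻¹) * ∏ i ∈ A', ((p i t : ℝ≥0)) ^ ((k : ℝ)⁻¹) := by
                refine Finset.sum_congr rfl fun t _ => ?_
                rw [NNReal.mul_rpow, ← NNReal.finset_prod_rpow]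
            _ = ((M : ℝ≥0)) ^ ((k : ℝ)⁻¹) *
                ∑ t ∈ T, ∏ i ∈ A', ((p i t : ℝ≥0)) ^ ((k : ℝ)⁻¹) := by
                rw [Finset.mul_sum]
            _ ≤ ((M : ℝ≥0)) ^ ((k : ℝ)⁻¹) *
                ∏ i ∈ A', ((∑ t ∈ T, (p i t : ℝ≥0))) ^ ((k : ℝ)⁻¹) := by
                refine mul_le_mul_right ?_ _
                exact holder_root A' T hA'ne (fun i t => (p i t : ℝ≥0))
        -- raise to the k-th power
        have hfinal : ((S.card : ℝ≥0)) ^ (k : ℕ) ≤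
            (M : ℝ≥0) * ∏ i ∈ A', ((∑ t ∈ T, (p i t : ℝ≥0))) := by
          have := NNReal.rpow_le_rpow hsum (le_of_lt (by positivity : (0:ℝ) < (k:ℝ)))
          calc ((S.card : ℝ≥0)) ^ (k : ℕ) = ((S.card : ℝ≥0)) ^ ((k : ℕ) : ℝ) :=
                (NNReal.rpow_natCast _ k).symm
            _ ≤ (((M : ℝ≥0)) ^ ((k : ℝ)⁻¹) *
                ∏ i ∈ A', ((∑ t ∈ T, (p i t : ℝ≥0))) ^ ((k : ℝ)⁻¹)) ^ ((k:ℕ) : ℝ) := this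
            _ = (M : ℝ≥0) * ∏ i ∈ A', ((∑ t ∈ T, (p i t : ℝ≥0))) := by
                rw [NNReal.mul_rpow, ← NNReal.rpow_mul, inv_mul_cancel₀ hkR, NNReal.rpow_one,
                  ← NNReal.finset_prod_rpow]
                congr 1
                refine Finset.prod_congr rfl fun i _ => ?_
                rw [← NNReal.rpow_mul, inv_mul_cancel₀ hkR, NNReal.rpow_one]
        have : ((S.card ^ k : ℕ) : ℝ≥0) ≤ ((M * ∏ i ∈ A', (∑ t ∈ T, p i t) : ℕ) : ℝ≥0) := by
          push_cast
          convert hfinal using 2 <;> push_cast <;> ring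
        exact_mod_cast this
      -- assemble
      calc S.card ^ (A.card - 1) = S.card ^ k := by rw [hkcard]
        _ ≤ M * ∏ i ∈ A', (∑ t ∈ T, p i t) := core
        _ ≤ M * ∏ i ∈ A', (S.image fun x => Function.update x i 0).card := by
            refine Nat.mul_le_mul_left _ (Finset.prod_le_prod' ?_)
            exact h5
        _ = ∏ i ∈ A, (S.image fun x => Function.update x i 0).card := by
            rw [hM, ← Finset.mul_prod_erase A _ hi0]


/-- Some coordinate projection is large. -/
lemma exists_proj_card {d : ℕ} (hd : 1 ≤ d) (S : Finset ((Fin d) → ℤ)) {t : ℕ} (ht : 1 ≤ t)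
    (hcard : t ^ d ≤ S.card) :
    ∃ i : Fin d, t ^ (d - 1) ≤ (S.image fun x => Function.update x i 0).card := by
  by_contra hcon
  push_neg at hcon
  have hS : S.Nonempty := by
    rw [← Finset.card_pos]
    calc 0 < 1 := one_pos
      _ ≤ t ^ d := Nat.one_le_pow _ _ ht
      _ ≤ S.card := hcard
  have hlw := loomis_whitney (Finset.univ : Finset (Fin d)) S hS
  rw [Finset.card_univ, Fintype.card_fin] at hlw
  have h1 : (t ^ (d-1)) ^ d ≤ S.card ^ (d - 1) := by
    calc (t ^ (d-1)) ^ d = (t ^ d) ^ (d - 1) := by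
          rw [← pow_mul, ← pow_mul, Nat.mul_comm]
      _ ≤ S.card ^ (d - 1) := Nat.pow_le_pow_left hcard _
  have h2 : ∏ i ∈ (Finset.univ : Finset (Fin d)),
      (S.image fun x => Function.update x i 0).card ≤ (t ^ (d-1) - 1) ^ d := by
    calc ∏ i ∈ (Finset.univ : Finset (Fin d)), (S.image fun x => Function.update x i 0).card
        ≤ ∏ _i ∈ (Finset.univ : Finset (Fin d)), (t ^ (d-1) - 1) := by
          refine Finset.prod_le_prod' fun i _ => ?_
          have := hcon i
          omega
      _ = (t ^ (d-1) - 1) ^ d := by rw [Finset.prod_const, Finset.card_univ, Fintype.card_fin]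
  have h3 : (t ^ (d-1) - 1) ^ d < (t ^ (d-1)) ^ d := by
    refine Nat.pow_lt_pow_left ?_ (by omega)
    have : 1 ≤ t ^ (d - 1) := Nat.one_le_pow _ _ ht
    omega
  omega

/-- Shift-union inequality: adding the `+eᵢ`-translate gains at least the `i`-projection. -/
lemma card_union_shift {d : ℕ} (S : Finset ((Fin d) → ℤ)) (i : Fin d) :
    S.card + (S.image fun x => Function.update x i 0).card ≤
      (S ∪ S.image fun x => Function.update x i (x i + 1)).card := by
  classical
  set P := S.image fun x => Function.update x i 0 with hP
  -- for each y in the projection, pick the element of the fiber with maximal i-coordinate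
  have hfib : ∀ y ∈ P, ∃ x ∈ S, Function.update x i 0 = y ∧
      ∀ z ∈ S, Function.update z i 0 = y → z i ≤ x i := by
    intro y hy
    obtain ⟨x0, hx0, hx0y⟩ := Finset.mem_image.mp hy
    set F := (S.filter fun z => Function.update z i 0 = y) with hF
    have hFne : F.Nonempty := ⟨x0, Finset.mem_filter.mpr ⟨hx0, hx0y⟩⟩
    have hNe : (F.image fun z => z i).Nonempty := hFne.image _
    obtain ⟨x, hxF, hxmax⟩ := Finset.mem_image.mp ((F.image fun z => z i).max'_mem hNe)
    refine ⟨x, (Finset.mem_filter.mp hxF).1, (Finset.mem_filter.mp hxF).2, ?_⟩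
    intro z hz hzy
    rw [hxmax]
    have hzF : z ∈ F := Finset.mem_filter.mpr ⟨hz, hzy⟩
    exact Finset.le_max' (F.image fun w => w i) (z i) (Finset.mem_image_of_mem _ hzF)
  choose pick hpickS hpickproj hpickmax using hfib
  set g : (Fin d → ℤ) → (Fin d → ℤ) := fun y =>
    if hy : y ∈ P then Function.update (pick y hy) i (pick y hy i + 1) else y with hg
  have hgshift : ∀ y ∈ P, g y ∈ S.image fun x => Function.update x i (x i + 1) := by
    intro y hy
    rw [hg]; simp only [dif_pos hy]
    exact Finset.mem_image_of_mem _ (hpickS y hy)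
  have hgproj : ∀ y ∈ P, Function.update (g y) i 0 = y := by
    intro y hy
    rw [hg]; simp only [dif_pos hy]
    rw [Function.update_idem]
    exact hpickproj y hy
  have hgnotS : ∀ y ∈ P, g y ∉ S := by
    intro y hy hmem
    have h1 := hpickmax y hy (g y) hmem (hgproj y hy)
    have : g y i = pick y hy i + 1 := by
      rw [hg]; simp only [dif_pos hy]; simp
    omega
  have hginj : Set.InjOn g ↑P := by
    intro y1 hy1 y2 hy2 heq
    have := hgproj y1 hy1
    rw [heq, hgproj y2 hy2] at this
    exact this.symm
  have hsub : S ∪ P.image g ⊆ S ∪ S.image fun x => Function.update x i (x i + 1) := by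
    intro v hv
    rcases Finset.mem_union.mp hv with h | h
    · exact Finset.mem_union_left _ h
    · obtain ⟨y, hy, rfl⟩ := Finset.mem_image.mp h
      exact Finset.mem_union_right _ (hgshift y hy)
  have hdisj : Disjoint S (P.image g) := by
    refine Finset.disjoint_right.mpr fun v hv hvS => ?_
    obtain ⟨y, hy, rfl⟩ := Finset.mem_image.mp hv
    exact hgnotS y hy hvS
  calc S.card + P.card = S.card + (P.image g).card := by
        rw [Finset.card_image_of_injOn hginj]
    _ = (S ∪ P.image g).card := (Finset.card_union_of_disjoint hdisj).symm
    _ ≤ _ := Finset.card_le_card hsub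


lemma adj_update {d : ℕ} (u : Fin d → ℤ) (i : Fin d) (e : ℤ) (he : e.natAbs = 1) :
    (gridZ d).Adj u (Function.update u i (u i + e)) := by
  show (∑ j, (u j - Function.update u i (u i + e) j).natAbs) = 1
  rw [Finset.sum_eq_single i]
  · rw [Function.update_self]
    simpa using he
  · intro j _ hj
    rw [Function.update_of_ne hj]
    simp
  · intro h
    exact absurd (Finset.mem_univ i) h

lemma adj_cases {d : ℕ} {u v : Fin d → ℤ} (h : (gridZ d).Adj u v) :
    ∃ i : Fin d, v = Function.update u i (u i + 1) ∨ v = Function.update u i (u i - 1) := by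
  have hsum : (∑ j, (u j - v j).natAbs) = 1 := h
  have hex : ∃ i : Fin d, (u i - v i).natAbs ≠ 0 := by
    by_contra hc
    push_neg at hc
    rw [Finset.sum_eq_zero (fun j _ => hc j)] at hsum
    omega
  obtain ⟨i, hi⟩ := hex
  have hsplit := Finset.add_sum_erase Finset.univ (fun j => (u j - v j).natAbs) (Finset.mem_univ i)
  rw [hsum] at hsplit
  have hi1 : (u i - v i).natAbs = 1 := by omega
  have hrest : ∀ j, j ≠ i → (u j - v j).natAbs = 0 := by
    intro j hj
    have hz : ∑ j ∈ Finset.univ.erase i, (u j - v j).natAbs = 0 := by omega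
    have := Finset.sum_eq_zero_iff.mp hz j (Finset.mem_erase.mpr ⟨hj, Finset.mem_univ j⟩)
    exact this
  have hvj : ∀ j, j ≠ i → v j = u j := by
    intro j hj
    have := hrest j hj
    have : u j - v j = 0 := Int.natAbs_eq_zero.mp this
    omega
  refine ⟨i, ?_⟩
  rcases Int.natAbs_eq_iff.mp hi1 with h1 | h1
  · right
    funext j
    rcases eq_or_ne j i with rfl | hj
    · rw [Function.update_self]; omega
    · rw [Function.update_of_ne hj]; exact hvj j hj
  · left
    funext j
    rcases eq_or_ne j i with rfl | hj
    · rw [Function.update_self]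
      have : u j - v j = -1 := by exact_mod_cast h1
      omega
    · rw [Function.update_of_ne hj]; exact hvj j hj

section Fire

variable {d : ℕ} {X0 : Set (Fin d → ℤ)} {W : ℕ → Set (Fin d → ℤ)}

lemma fire_zero : fireSet (gridZ d) 1 X0 W 0 = X0 := rfl

lemma fire_avoid {n : ℕ} {v : Fin d → ℤ} (hv : v ∈ fireSet (gridZ d) 1 X0 W n) :
    ∀ i, 1 ≤ i → i ≤ n → v ∉ W i := by
  cases n with
  | zero => intro i h1 h2; omega
  | succ n =>
    obtain ⟨u, hu, p, hlen, hav⟩ := hv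
    exact fun i h1 h2 => hav v (Walk.end_mem_support p) i h1 h2

variable (hdisj : ∀ n, Disjoint (fireSet (gridZ d) 1 X0 W n) (W (n + 1)))
include hdisj

lemma fire_notW {n : ℕ} {v : Fin d → ℤ} (hv : v ∈ fireSet (gridZ d) 1 X0 W n) :
    ∀ i, 1 ≤ i → i ≤ n + 1 → v ∉ W i := by
  intro i h1 h2
  rcases Nat.lt_or_ge i (n + 1) with h | h
  · exact fire_avoid hv i h1 (by omega)
  · have : i = n + 1 := by omega
    subst this
    exact fun hmem => Set.disjoint_left.mp (hdisj n) hv hmem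

lemma fire_mono {n : ℕ} : fireSet (gridZ d) 1 X0 W n ⊆ fireSet (gridZ d) 1 X0 W (n + 1) := by
  intro u hu
  refine ⟨u, hu, Walk.nil, by simp, ?_⟩
  intro w hw i h1 h2
  simp only [Walk.support_nil, List.mem_singleton] at hw
  subst hw
  exact fire_notW hdisj hu i h1 h2

lemma fire_mono_le {a b : ℕ} (hab : a ≤ b) :
    fireSet (gridZ d) 1 X0 W a ⊆ fireSet (gridZ d) 1 X0 W b := by
  induction b with
  | zero => have : a = 0 := by omega
            subst this; exact subset_rfl
  | succ b ih =>
    rcases Nat.lt_or_ge a (b+1) with h | h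
    · exact (ih (by omega)).trans (fire_mono hdisj)
    · have : a = b + 1 := by omega
      subst this; exact subset_rfl

lemma fire_step {n : ℕ} {u v : Fin d → ℤ} (hu : u ∈ fireSet (gridZ d) 1 X0 W n)
    (hadj : (gridZ d).Adj u v) (hv : ∀ i, 1 ≤ i → i ≤ n + 1 → v ∉ W i) :
    v ∈ fireSet (gridZ d) 1 X0 W (n + 1) := by
  refine ⟨u, hu, Walk.cons hadj Walk.nil, by simp, ?_⟩
  intro w hw i h1 h2
  simp only [Walk.support_cons, Walk.support_nil, List.mem_cons, List.mem_singleton,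
    List.not_mem_nil, or_false] at hw
  rcases hw with rfl | rfl
  · exact fire_notW hdisj hu i h1 h2
  · exact hv i h1 h2

omit hdisj

lemma fire_succ_subset {n : ℕ} :
    fireSet (gridZ d) 1 X0 W (n + 1) ⊆
      fireSet (gridZ d) 1 X0 W n ∪ ⋃ u ∈ fireSet (gridZ d) 1 X0 W n, {v | (gridZ d).Adj u v} := by
  rintro v ⟨u, hu, p, hlen, hav⟩
  cases p with
  | nil => exact Set.mem_union_left _ hu
  | cons h q =>
    have hq : q.length = 0 := by
      simp only [Walk.length_cons] at hlen
      omega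
    have := Walk.eq_of_length_eq_zero hq
    subst this
    refine Set.mem_union_right _ ?_
    exact Set.mem_biUnion hu h

lemma fire_finite (hX0 : X0.Finite) (n : ℕ) : (fireSet (gridZ d) 1 X0 W n).Finite := by
  induction n with
  | zero => exact hX0
  | succ n ih =>
    refine Set.Finite.subset ?_ (fire_succ_subset (d := d))
    refine ih.union (ih.biUnion fun u _ => ?_)
    have hsub : {v | (gridZ d).Adj u v} ⊆
        ↑((Finset.univ : Finset (Fin d × Bool)).image fun c =>
          Function.update u c.1 (u c.1 + if c.2 then 1 else -1)) := by
      intro v hv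
      obtain ⟨i, hcase⟩ := adj_cases hv
      rcases hcase with rfl | rfl
      · exact Finset.mem_coe.mpr (Finset.mem_image.mpr ⟨(i, true), Finset.mem_univ _, by simp⟩)
      · refine Finset.mem_coe.mpr (Finset.mem_image.mpr ⟨(i, false), Finset.mem_univ _, ?_⟩)
        simp only [if_neg Bool.false_ne_true]
        rw [Int.sub_eq_add_neg]
    exact Set.Finite.subset (Finset.finite_toSet _) hsub

end Fire

/-- Main lemma. -/
lemma not_contain {d q c : ℕ} (hqd : q + 3 ≤ d) :
    ¬ HasContainmentProperty (gridZ d) 1 (fun n => c * n ^ q) := by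
  classical
  intro hcont
  set D : ℕ := d * 2 ^ d with hD
  have hD1 : 1 ≤ D := by
    have : 1 ≤ 2 ^ d := Nat.one_le_two_pow
    have hd3 : 3 ≤ d := by omega
    calc 1 ≤ d * 1 := by omega
      _ ≤ d * 2 ^ d := Nat.mul_le_mul_left d this
  set m : ℕ := 2 * c * D ^ (d - 2) + 1 with hm
  have hm1 : 1 ≤ m := by omega
  -- the initial fire: a cube of side m
  set X0F : Finset (Fin d → ℤ) := Fintype.piFinset (fun _ : Fin d =>
    (Finset.range m).map ⟨fun n : ℕ => (n : ℤ), fun a b h => Int.natCast_inj.mp (by simpa using h)⟩) with hX0F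
  have hX0card : X0F.card = m ^ d := by
    rw [hX0F, Fintype.card_piFinset]
    simp [Finset.card_map, Finset.card_range]
  obtain ⟨W, hWsize, hdisj, N, hN0, hstab⟩ := hcont ↑X0F (X0F.finite_toSet)
  have hfin : ∀ n, (fireSet (gridZ d) 1 ↑X0F W n).Finite :=
    fire_finite (X0F.finite_toSet)
  set Bf : ℕ → Finset (Fin d → ℤ) := fun n => (hfin n).toFinset with hBf
  have hBfmem : ∀ n v, v ∈ Bf n ↔ v ∈ fireSet (gridZ d) 1 ↑X0F W n := by
    intro n v; rw [hBf]; exact Set.Finite.mem_toFinset _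
  have hBf0card : (Bf 0).card = m ^ d := by
    have : Bf 0 = X0F := by
      ext v
      rw [hBfmem 0 v, fire_zero, Finset.mem_coe]
    rw [this, hX0card]
  have hBfmono : ∀ a b : ℕ, a ≤ b → (Bf a).card ≤ (Bf b).card := by
    intro a b hab
    refine Finset.card_le_card fun v hv => ?_
    rw [hBfmem] at hv ⊢
    exact fire_mono_le hdisj hab hv
  clear_value Bf
  -- the cumulative wall
  set Wf : ℕ → Finset (Fin d → ℤ) := fun i =>
    if h : 1 ≤ i then ((hWsize i h).1).toFinset else ∅ with hWf
  have hWfmem : ∀ i v, 1 ≤ i → (v ∈ W i ↔ v ∈ Wf i) := by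
    intro i v hi
    rw [hWf]
    simp only [dif_pos hi]
    exact (Set.Finite.mem_toFinset _).symm
  set cumW : ℕ → Finset (Fin d → ℤ) := fun n => (Finset.Icc 1 n).biUnion Wf with hcumW
  have hcum_card : ∀ n, 1 ≤ n → (cumW n).card ≤ c * n ^ (d - 2) := by
    intro n hn
    calc (cumW n).card ≤ ∑ i ∈ Finset.Icc 1 n, (Wf i).card := Finset.card_biUnion_le
      _ ≤ ∑ _i ∈ Finset.Icc 1 n, c * n ^ q := by
          refine Finset.sum_le_sum fun i hi => ?_
          obtain ⟨hi1, hin⟩ := Finset.mem_Icc.mp hi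
          have hcard : (Wf i).card ≤ c * i ^ q := by
            rw [hWf]
            simp only [dif_pos hi1]
            rw [← Set.ncard_eq_toFinset_card _ (hWsize i hi1).1]
            exact (hWsize i hi1).2
          calc (Wf i).card ≤ c * i ^ q := hcard
            _ ≤ c * n ^ q := Nat.mul_le_mul_left c (Nat.pow_le_pow_left hin q)
      _ = n * (c * n ^ q) := by rw [Finset.sum_const, Nat.card_Icc]; simp [mul_comm]
      _ = c * n ^ (q + 1) := by ring
      _ ≤ c * n ^ (d - 2) := by
          refine Nat.mul_le_mul_left c (Nat.pow_le_pow_right (by omega) (by omega))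
  clear_value Wf cumW
  -- one step of growth
  have step : ∀ n t : ℕ, 1 ≤ t → t ^ d ≤ (Bf n).card →
      t ^ (d - 1) + (Bf n).card ≤ (Bf (n + 1)).card + c * (n + 1) ^ (d - 2) := by
    intro n t ht hcard
    obtain ⟨i, hproj⟩ := exists_proj_card (by omega) (Bf n) ht hcard
    have hshift := card_union_shift (Bf n) i
    have hsub : (Bf n ∪ (Bf n).image fun x => Function.update x i (x i + 1)) ⊆
        Bf (n + 1) ∪ cumW (n + 1) := by
      intro v hv
      rcases Finset.mem_union.mp hv with h | h
      · refine Finset.mem_union_left _ ?_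
        rw [hBfmem] at h ⊢
        exact fire_mono_le hdisj (Nat.le_succ n) h
      · obtain ⟨u, hu, rfl⟩ := Finset.mem_image.mp h
        by_cases hcw : Function.update u i (u i + 1) ∈ cumW (n + 1)
        · exact Finset.mem_union_right _ hcw
        · refine Finset.mem_union_left _ ?_
          rw [hBfmem] at hu ⊢
          refine fire_step hdisj hu (adj_update u i 1 rfl) ?_
          intro j h1 h2 hmem
          refine hcw ?_
          rw [hcumW]
          exact Finset.mem_biUnion.mpr ⟨j, Finset.mem_Icc.mpr ⟨h1, h2⟩,
            (hWfmem j _ h1).mp hmem⟩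
    calc t ^ (d - 1) + (Bf n).card
        ≤ (Finset.image (fun x => Function.update x i 0) (Bf n)).card + (Bf n).card :=
          Nat.add_le_add_right hproj _
      _ = (Bf n).card + (Finset.image (fun x => Function.update x i 0) (Bf n)).card :=
          Nat.add_comm _ _
      _ ≤ (Bf n ∪ (Bf n).image fun x => Function.update x i (x i + 1)).card := hshift
      _ ≤ (Bf (n + 1) ∪ cumW (n + 1)).card := Finset.card_le_card hsub
      _ ≤ (Bf (n + 1)).card + (cumW (n + 1)).card := Finset.card_union_le _ _
      _ ≤ (Bf (n + 1)).card + c * (n + 1) ^ (d - 2) :=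
          Nat.add_le_add_left (hcum_card (n + 1) (Nat.succ_le_succ (Nat.zero_le n))) _
  -- growth over a window of D steps
  have grow : ∀ k : ℕ, (m + k) ^ d ≤ (Bf (k * D)).card →
      (m + k + 1) ^ d ≤ (Bf ((k + 1) * D)).card := by
    intro k hk
    set s : ℕ := m + k with hs
    have hs1 : 1 ≤ s := by omega
    set n0 : ℕ := k * D with hn0
    set C : ℕ := c * ((k + 1) * D) ^ (d - 2) with hC
    have inner : ∀ j : ℕ, j ≤ D →
        (Bf n0).card + j * s ^ (d - 1) ≤ (Bf (n0 + j)).card + j * C := by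
      intro j
      induction j with
      | zero => intro _; simp
      | succ j ih =>
        intro hj1
        show (Bf n0).card + (j + 1) * s ^ (d - 1) ≤ (Bf (n0 + j + 1)).card + (j + 1) * C
        have hprev := ih (by omega)
        have hcard_n : s ^ d ≤ (Bf (n0 + j)).card :=
          le_trans hk (hBfmono _ _ (by omega))
        have hstep := step (n0 + j) s hs1 hcard_n
        have hCb : c * (n0 + j + 1) ^ (d - 2) ≤ C := by
          rw [hC]
          refine Nat.mul_le_mul_left c (Nat.pow_le_pow_left ?_ _)
          have : (k + 1) * D = n0 + D := by rw [hn0]; ring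
          omega
        calc (Bf n0).card + (j + 1) * s ^ (d - 1)
            = ((Bf n0).card + j * s ^ (d - 1)) + s ^ (d - 1) := by ring
          _ ≤ ((Bf (n0 + j)).card + j * C) + s ^ (d - 1) := Nat.add_le_add_right hprev _
          _ = (s ^ (d - 1) + (Bf (n0 + j)).card) + j * C := by ring
          _ ≤ ((Bf (n0 + j + 1)).card + c * (n0 + j + 1) ^ (d - 2)) + j * C :=
              Nat.add_le_add_right hstep _
          _ ≤ ((Bf (n0 + j + 1)).card + C) + j * C :=
              Nat.add_le_add_right (Nat.add_le_add_left hCb _) _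
          _ = (Bf (n0 + j + 1)).card + (j + 1) * C := by ring
    have hwin := inner D le_rfl
    -- bound D * C
    have hDC : D * C ≤ d * 2 ^ (d - 1) * s ^ (d - 1) := by
      have h1 : C ≤ c * D ^ (d - 2) * s ^ (d - 2) := by
        rw [hC]
        calc c * ((k + 1) * D) ^ (d - 2) ≤ c * (s * D) ^ (d - 2) := by
              refine Nat.mul_le_mul_left c (Nat.pow_le_pow_left ?_ _)
              have : k + 1 ≤ s := by omega
              exact Nat.mul_le_mul_right D this
          _ = c * D ^ (d - 2) * s ^ (d - 2) := by rw [mul_pow]; ring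
      have h2 : D * C ≤ D * (c * D ^ (d - 2) * s ^ (d - 2)) := Nat.mul_le_mul_left D h1
      have h3 : D * (c * D ^ (d - 2) * s ^ (d - 2)) = d * 2 ^ (d - 1) *
          ((2 * c * D ^ (d - 2)) * s ^ (d - 2)) := by
        rw [hD]
        have h2d : (2:ℕ) ^ d = 2 * 2 ^ (d - 1) := by
          rw [← pow_succ']
          congr 1
          omega
        rw [h2d]
        ring
      have h4 : (2 * c * D ^ (d - 2)) * s ^ (d - 2) ≤ s * s ^ (d - 2) := by
        refine Nat.mul_le_mul_right _ ?_
        omega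
      have h5 : s * s ^ (d - 2) = s ^ (d - 1) := by
        rw [← pow_succ']
        congr 1
        omega
      calc D * C ≤ d * 2 ^ (d - 1) * ((2 * c * D ^ (d - 2)) * s ^ (d - 2)) := by
            rw [← h3]; exact h2
        _ ≤ d * 2 ^ (d - 1) * (s * s ^ (d - 2)) := Nat.mul_le_mul_left _ h4
        _ = d * 2 ^ (d - 1) * s ^ (d - 1) := by rw [h5]
    have hDs : D * s ^ (d - 1) = d * 2 ^ (d - 1) * s ^ (d - 1) + d * 2 ^ (d - 1) * s ^ (d - 1)
        := by
      rw [hD]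
      have h2d : (2:ℕ) ^ d = 2 * 2 ^ (d - 1) := by
        rw [← pow_succ']
        congr 1
        omega
      rw [h2d]
      ring
    have hbinom := binom_bound (d := d) hs1
    -- conclude
    have hchain : s ^ d + D * s ^ (d - 1) ≤ (Bf (n0 + D)).card + D * C := by
      calc s ^ d + D * s ^ (d - 1) ≤ (Bf n0).card + D * s ^ (d - 1) :=
            Nat.add_le_add_right hk _
        _ ≤ (Bf (n0 + D)).card + D * C := hwin
    have hfinal : (s + 1) ^ d ≤ (Bf (n0 + D)).card := by
      rw [hDs] at hchain
      linarith [hchain, hDC, hbinom]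
    have hrw : n0 + D = (k + 1) * D := by rw [hn0]; ring
    rw [← hrw]
    have : m + k + 1 = s + 1 := by omega
    rw [this]
    exact hfinal
  -- all windows
  have allk : ∀ k : ℕ, (m + k) ^ d ≤ (Bf (k * D)).card := by
    intro k
    induction k with
    | zero => simpa [hBf0card] using le_rfl
    | succ k ih => exact grow k ih
  -- contradiction with stabilization
  set K : ℕ := (Bf N).card + N + 1 with hK
  have hKD : N ≤ K * D := by
    calc N ≤ K := by omega
      _ = K * 1 := by omega
      _ ≤ K * D := Nat.mul_le_mul_left K hD1
  have heq : fireSet (gridZ d) 1 ↑X0F W (K * D) = fireSet (gridZ d) 1 ↑X0F W N :=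
    hstab (K * D) hKD
  have hBfeq : Bf (K * D) = Bf N := by
    ext v
    rw [hBfmem, hBfmem, heq]
  have h1 : (m + K) ^ d ≤ (Bf N).card := by
    have := allk K
    rwa [hBfeq] at this
  have h2 : m + K ≤ (m + K) ^ d := Nat.le_self_pow (by omega) _
  omega


end FFaux

/-- for positive integers `q < d - 2`, the grid `L^d` does not satisfy the
`O(n^q)`-containment property; in particular, for `d ≥ 4`, `L^d` does not satisfy the
`O(n^(d-3))`-containment property. -/
theorem stmt17 (d q : ℕ) (hd : 0 < d) (hq : 0 < q) (hlt : q + 2 < d) :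
    (¬ ∃ c : ℕ, 1 ≤ c ∧ HasContainmentProperty (gridZ d) 1 (fun n => c * n ^ q)) ∧
    (4 ≤ d →
      ¬ ∃ c : ℕ, 1 ≤ c ∧ HasContainmentProperty (gridZ d) 1 (fun n => c * n ^ (d - 3))) := by
  constructor
  · rintro ⟨c, hc, h⟩
    exact FFaux.not_contain (by omega : q + 3 ≤ d) h
  · intro h4
    rintro ⟨c, hc, h⟩
    exact FFaux.not_contain (by omega : (d - 3) + 3 ≤ d) h

end Firefighter
end

section
/- For every integer d ≥ 2, the d-dimensional square grid L^d satisfies the O(n^{d−2})-containment property: there is a constant c ≥ 1 such that L^d has the {c·n^{d−2}}-containment property. -/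
open SimpleGraph

namespace Firefighter

variable {V : Type*}

section Aux

lemma walk_le_one {V : Type*} {G : SimpleGraph V} {u v : V} (p : G.Walk u v)
    (hp : p.length ≤ 1) : u = v ∨ G.Adj u v := by
  cases p with
  | nil => exact Or.inl rfl
  | @cons _ w _ h q =>
    have h0 : q.length = 0 := by rw [SimpleGraph.Walk.length_cons] at hp; omega
    have := q.eq_of_length_eq_zero h0
    subst this
    exact Or.inr h

lemma find_step (t : ℕ → ℕ) (ht0 : t 0 = 0) :
    ∀ m k, k < t m → ∃ j, 1 ≤ j ∧ j ≤ m ∧ t (j-1) ≤ k ∧ k < t j := by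
  intro m
  induction m with
  | zero => intro k hk; omega
  | succ m ih =>
    intro k hk
    by_cases h : k < t m
    · obtain ⟨j, h1, h2, h3, h4⟩ := ih k h
      exact ⟨j, h1, by omega, h3, h4⟩
    · exact ⟨m+1, by omega, le_refl _, by simpa using not_lt.mp h, hk⟩

/-- The ℓ¹ norm of a lattice point. -/
def nrm {d : ℕ} (x : Fin d → ℤ) : ℕ := ∑ i, (x i).natAbs

lemma nrm_coord_le {d : ℕ} (x : Fin d → ℤ) (i : Fin d) : (x i).natAbs ≤ nrm x :=
  Finset.single_le_sum (f := fun i => (x i).natAbs) (fun _ _ => Nat.zero_le _) (Finset.mem_univ i)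

lemma nrm_adj {d : ℕ} {u v : Fin d → ℤ} (h : (gridZ d).Adj u v) :
    nrm v ≤ nrm u + 1 := by
  have h' : ∑ i, (u i - v i).natAbs = 1 := h
  calc nrm v = ∑ i, (v i).natAbs := rfl
    _ ≤ ∑ i, ((u i).natAbs + (u i - v i).natAbs) :=
        Finset.sum_le_sum fun i _ => by omega
    _ = nrm u + 1 := by rw [Finset.sum_add_distrib, h']; rfl

lemma nrm_le_finite (d D : ℕ) : {x : Fin d → ℤ | nrm x ≤ D}.Finite := by
  apply Set.Finite.subset (Set.Finite.pi (fun _ : Fin d => Set.finite_Icc (-(D:ℤ)) (D:ℤ)))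
  intro x hx
  rw [Set.mem_pi]
  intro i _
  have h2 : (x i).natAbs ≤ D := le_trans (nrm_coord_le x i) hx
  simp only [Set.mem_Icc]
  omega

lemma nrm_eq_finite (d D : ℕ) : {x : Fin d → ℤ | nrm x = D}.Finite :=
  (nrm_le_finite d D).subset (fun _ hx => le_of_eq hx)

lemma sphere_card_le {d : ℕ} (hd : 0 < d) (D : ℕ) :
    (nrm_eq_finite d D).toFinset.card ≤ 2 * (2*D+1)^(d-1) := by
  classical
  set j : Fin d := ⟨0, hd⟩ with hj
  set T : Finset (Fin d → ℤ) :=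
    Fintype.piFinset (fun i => if i = j then ({0,1} : Finset ℤ) else Finset.Icc (-(D:ℤ)) (D:ℤ))
    with hT
  have hTcard : T.card = 2 * (2*D+1)^(d-1) := by
    rw [hT, Fintype.card_piFinset]
    rw [← Finset.mul_prod_erase Finset.univ _ (Finset.mem_univ j)]
    have h1 : (if j = j then ({0,1} : Finset ℤ) else Finset.Icc (-(D:ℤ)) (D:ℤ)).card = 2 := by
      simp
    have h2 : ∏ i ∈ Finset.univ.erase j,
        (if i = j then ({0,1} : Finset ℤ) else Finset.Icc (-(D:ℤ)) (D:ℤ)).card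
        = (2*D+1)^(d-1) := by
      rw [Finset.prod_congr rfl (fun i hi => by
        rw [if_neg (Finset.ne_of_mem_erase hi)])]
      rw [Finset.prod_const, Int.card_Icc]
      congr 1
      · omega
      · rw [Finset.card_erase_of_mem (Finset.mem_univ j), Finset.card_univ, Fintype.card_fin]
    rw [h1, h2]
  rw [← hTcard]
  apply Finset.card_le_card_of_injOn (fun x => Function.update x j (if 0 ≤ x j then 1 else 0))
  · intro x hx
    rw [Finset.mem_coe, Set.Finite.mem_toFinset] at hx
    rw [hT, Finset.mem_coe, Fintype.mem_piFinset]
    intro i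
    by_cases hij : i = j
    · subst hij
      beta_reduce
      rw [Function.update_self, if_pos rfl]
      split <;> simp
    · beta_reduce
      rw [Function.update_of_ne hij, if_neg hij]
      have h2 : (x i).natAbs ≤ D := hx ▸ nrm_coord_le x i
      rw [Finset.mem_Icc]
      omega
  · intro x hx y hy hxy
    simp only [Finset.mem_coe, Set.Finite.mem_toFinset, Set.mem_setOf_eq] at hx hy
    have hne : ∀ i, i ≠ j → x i = y i := by
      intro i hij
      have := congrFun hxy i
      simpa [Function.update_of_ne hij] using this
    have hbit : (if 0 ≤ x j then (1:ℤ) else 0) = (if 0 ≤ y j then 1 else 0) := by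
      have := congrFun hxy j
      simpa [Function.update_self] using this
    have hsum : (x j).natAbs = (y j).natAbs := by
      have ex : nrm x = (x j).natAbs + ∑ i ∈ Finset.univ.erase j, (x i).natAbs :=
        (Finset.add_sum_erase Finset.univ _ (Finset.mem_univ j)).symm
      have ey : nrm y = (y j).natAbs + ∑ i ∈ Finset.univ.erase j, (y i).natAbs :=
        (Finset.add_sum_erase Finset.univ _ (Finset.mem_univ j)).symm
      have heq : ∑ i ∈ Finset.univ.erase j, (x i).natAbs
          = ∑ i ∈ Finset.univ.erase j, (y i).natAbs :=
        Finset.sum_congr rfl (fun i hi => by rw [hne i (Finset.ne_of_mem_erase hi)])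
      rw [hx] at ex; rw [hy] at ey
      omega
    have hxyj : x j = y j := by
      by_cases h0 : 0 ≤ x j
      · by_cases h0' : 0 ≤ y j
        · omega
        · rw [if_pos h0, if_neg h0'] at hbit; norm_num at hbit
      · by_cases h0' : 0 ≤ y j
        · rw [if_neg h0, if_pos h0'] at hbit; norm_num at hbit
        · omega
    funext i
    by_cases hij : i = j
    · subst hij; exact hxyj
    · exact hne i hij

end Aux


/-- for `d ≥ 2`, the `d`-dimensional square grid `L^d` satisfies the
`O(n^(d-2))`-containment property. -/
theorem stmt18 (d : ℕ) (hd : 2 ≤ d) :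
    ∃ c : ℕ, 1 ≤ c ∧ HasContainmentProperty (gridZ d) 1 (fun n => c * n ^ (d - 2)) := by
  classical
  obtain ⟨e, rfl⟩ := Nat.exists_eq_add_of_le hd
  have hde : 2 + e - 2 = e := by omega
  have hc1 : 1 ≤ 2 * 7 ^ (e + 1) := by
    have h : 0 < 2 * 7 ^ (e + 1) := by positivity
    omega
  refine ⟨2 * 7 ^ (e + 1), hc1, ?_⟩
  set c := 2 * 7 ^ (e + 1) with hc
  intro X0 hX0
  obtain ⟨R, hR⟩ : ∃ R : ℕ, ∀ x ∈ X0, nrm x ≤ R := by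
    obtain ⟨R, hR⟩ := (hX0.image nrm).bddAbove
    exact ⟨R, fun x hx => hR (Set.mem_image_of_mem nrm hx)⟩
  set s := max R 1 with hs
  have hs1 : 1 ≤ s := le_max_right R 1
  have hRs : R ≤ s := le_max_left R 1
  set m := 2 * s with hm
  set D := R + m with hD
  set S : Finset (Fin (2+e) → ℤ) := (nrm_eq_finite (2+e) D).toFinset with hS
  have hSmem : ∀ v, v ∈ S ↔ nrm v = D := by
    intro v; rw [hS, Set.Finite.mem_toFinset]; rfl
  set t : ℕ → ℕ := fun n => ∑ i ∈ Finset.Icc 1 n, c * i ^ e with ht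
  have ht0 : t 0 = 0 := by simp [ht]
  have hstep : ∀ k, t (k+1) = t k + c * (k+1) ^ e := by
    intro k
    rw [ht]
    exact Finset.sum_Icc_succ_top (by omega) _
  set idx : (Fin (2+e) → ℤ) → ℕ :=
    fun v => if h : v ∈ S then (S.equivFin ⟨v, h⟩ : ℕ) else 0 with hidx
  have hinj : ∀ v, v ∈ S → ∀ v', v' ∈ S → idx v = idx v' → v = v' := by
    intro v hv v' hv' h
    rw [hidx] at h
    simp only [dif_pos hv, dif_pos hv'] at h
    have h2 : S.equivFin ⟨v, hv⟩ = S.equivFin ⟨v', hv'⟩ := Fin.ext h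
    have := S.equivFin.injective h2
    exact congrArg Subtype.val this
  have hidxlt : ∀ v, v ∈ S → idx v < S.card := by
    intro v hv
    rw [hidx]
    simp only [dif_pos hv]
    exact (S.equivFin ⟨v, hv⟩).isLt
  set W : ℕ → Set (Fin (2+e) → ℤ) :=
    fun n => {v | v ∈ S ∧ t (n-1) ≤ idx v ∧ idx v < t n} with hW
  have hWnrm : ∀ n v, v ∈ W n → nrm v = D := by
    intro n v hv
    exact (hSmem v).mp hv.1
  -- the key counting inequality
  have hSt : S.card ≤ t m := by
    have h1 : S.card ≤ 2 * (2*D+1)^(e+1) := by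
      have := sphere_card_le (d := 2+e) (by omega) D
      have h' : 2 + e - 1 = e + 1 := by omega
      rw [h'] at this
      exact this
    have hDle : 2*D+1 ≤ 7*s := by omega
    have h2 : 2 * (2*D+1)^(e+1) ≤ 2 * (7*s)^(e+1) :=
      Nat.mul_le_mul_left 2 (Nat.pow_le_pow_left hDle _)
    have h3 : 2 * (7*s)^(e+1) = s * (c * s^e) := by rw [hc]; ring
    have h4 : s * (c * s^e) ≤ t m := by
      calc s * (c * s^e) = (Finset.Icc (s+1) (2*s)).card * (c * s^e) := by
            rw [Nat.card_Icc]; congr 1; omega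
        _ ≤ ∑ i ∈ Finset.Icc (s+1) (2*s), c * i^e := by
            have := Finset.card_nsmul_le_sum (Finset.Icc (s+1) (2*s))
              (fun i => c * i^e) (c * s^e) (fun i hi => by
                have hi' := (Finset.mem_Icc.mp hi).1
                exact Nat.mul_le_mul_left c (Nat.pow_le_pow_left (by omega) e))
            simpa [smul_eq_mul] using this
        _ ≤ t m := by
            rw [ht]
            exact Finset.sum_le_sum_of_subset (Finset.Icc_subset_Icc (by omega) (by omega))
    omega
  have hcov : ∀ v, v ∈ S → ∃ j, 1 ≤ j ∧ j ≤ m ∧ v ∈ W j := by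
    intro v hv
    have hlt : idx v < t m := lt_of_lt_of_le (hidxlt v hv) hSt
    obtain ⟨j, h1, h2, h3, h4⟩ := find_step t ht0 m (idx v) hlt
    exact ⟨j, h1, h2, hv, h3, h4⟩
  -- fire spreads at speed one
  have hA : ∀ n, ∀ v ∈ fireSet (gridZ (2+e)) 1 X0 W n, nrm v ≤ R + n := by
    intro n
    induction n with
    | zero => intro v hv; exact le_trans (hR v hv) (by omega)
    | succ n ih =>
      intro v hv
      simp only [fireSet, Set.mem_setOf_eq] at hv
      obtain ⟨u, hu, p, hp, -⟩ := hv
      rcases walk_le_one p hp with rfl | hadj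
      · exact le_trans (ih _ hu) (by omega)
      · have h1 := nrm_adj hadj
        have h2 := ih u hu
        omega
  have hRD : R < D := by omega
  -- fire stays strictly inside the sphere of radius D
  have hB : ∀ n, ∀ v ∈ fireSet (gridZ (2+e)) 1 X0 W n, nrm v < D := by
    intro n
    induction n with
    | zero => intro v hv; exact lt_of_le_of_lt (hR v hv) hRD
    | succ n ih =>
      intro v hv
      simp only [fireSet, Set.mem_setOf_eq] at hv
      obtain ⟨u, hu, p, hp, hav⟩ := hv
      rcases walk_le_one p hp with rfl | hadj
      · exact ih _ hu
      · have h1 := nrm_adj hadj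
        have h2 := ih u hu
        rcases lt_or_eq_of_le (show nrm v ≤ D by omega) with h | h
        · exact h
        · exfalso
          obtain ⟨j, hj1, hj2, hjW⟩ := hcov v ((hSmem v).mpr h)
          have h3 := hA n u hu
          exact hav v p.end_mem_support j hj1 (by omega) hjW
  have hdisj : ∀ n, Disjoint (fireSet (gridZ (2+e)) 1 X0 W n) (W (n+1)) := by
    intro n
    rw [Set.disjoint_left]
    intro v hv hvW
    exact absurd (hWnrm (n+1) v hvW) (ne_of_lt (hB n v hv))
  have hmono : ∀ n, fireSet (gridZ (2+e)) 1 X0 W n ⊆ fireSet (gridZ (2+e)) 1 X0 W (n+1) := by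
    intro n v hv
    simp only [fireSet, Set.mem_setOf_eq]
    refine ⟨v, hv, SimpleGraph.Walk.nil, by simp, ?_⟩
    intro w hw i h1 h2 hwW
    simp only [SimpleGraph.Walk.support_nil, List.mem_singleton] at hw
    subst hw
    exact absurd (hWnrm i w hwW) (ne_of_lt (hB n w hv))
  have hstall : ∃ n, fireSet (gridZ (2+e)) 1 X0 W (n+1) = fireSet (gridZ (2+e)) 1 X0 W n := by
    by_contra hcon
    push_neg at hcon
    have hfin : ∀ n, (fireSet (gridZ (2+e)) 1 X0 W n).Finite := fun n =>
      (nrm_le_finite (2+e) D).subset (fun v hv => le_of_lt (hB n v hv))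
    have hssub : ∀ n, fireSet (gridZ (2+e)) 1 X0 W n ⊂ fireSet (gridZ (2+e)) 1 X0 W (n+1) :=
      fun n => ssubset_of_subset_of_ne (hmono n) (Ne.symm (hcon n))
    have hcard : ∀ n, n ≤ (fireSet (gridZ (2+e)) 1 X0 W n).ncard := by
      intro n
      induction n with
      | zero => exact Nat.zero_le _
      | succ n ih =>
        have := Set.ncard_lt_ncard (hssub n) (hfin (n+1))
        omega
    set K := {x : Fin (2+e) → ℤ | nrm x ≤ D}.ncard with hK
    have hb : (fireSet (gridZ (2+e)) 1 X0 W (K+1)).ncard ≤ K :=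
      Set.ncard_le_ncard (fun v hv => le_of_lt (hB (K+1) v hv)) (nrm_le_finite (2+e) D)
    have := hcard (K+1)
    omega
  obtain ⟨n0, hn0⟩ := hstall
  have hconst : ∀ k, fireSet (gridZ (2+e)) 1 X0 W (n0 + k) = fireSet (gridZ (2+e)) 1 X0 W n0 := by
    intro k
    induction k with
    | zero => rfl
    | succ k ih =>
      apply Set.Subset.antisymm
      · intro v hv
        simp only [fireSet, Set.mem_setOf_eq] at hv
        obtain ⟨u, hu, p, hp, hav⟩ := hv
        have hu' : u ∈ fireSet (gridZ (2+e)) 1 X0 W n0 := ih ▸ hu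
        have hv1 : v ∈ fireSet (gridZ (2+e)) 1 X0 W (n0+1) := by
          simp only [fireSet, Set.mem_setOf_eq]
          exact ⟨u, hu', p, hp, fun w hw i h1 h2 =>
            hav w hw i h1 (h2.trans (Nat.add_le_add_left (Nat.succ_le_succ (Nat.zero_le k)) n0))⟩
        rw [hn0] at hv1
        exact hv1
      · intro v hv
        exact hmono (n0+k) (ih.symm ▸ hv)
  refine ⟨W, ?_, hdisj, ⟨n0 + 1, by omega, ?_⟩⟩
  · intro n hn
    constructor
    · exact (S.finite_toSet).subset (fun v hv => Finset.mem_coe.mpr hv.1)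
    · show (W n).ncard ≤ c * n ^ (2 + e - 2)
      rw [hde]
      obtain ⟨k, rfl⟩ : ∃ k, n = k + 1 := ⟨n-1, by omega⟩
      have hcalc : (W (k+1)).ncard ≤ (↑(Finset.Ico (t k) (t (k+1))) : Set ℕ).ncard := by
        apply Set.ncard_le_ncard_of_injOn idx
        · intro v hv
          rw [Finset.coe_Ico, Set.mem_Ico]
          exact ⟨hv.2.1, hv.2.2⟩
        · intro v hv v' hv' h
          exact hinj v hv.1 v' hv'.1 h
      rw [Set.ncard_coe_finset, Nat.card_Ico] at hcalc
      have := hstep k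
      omega
  · intro n hn
    obtain ⟨k, rfl⟩ := Nat.exists_eq_add_of_le hn
    have e1 : fireSet (gridZ (2+e)) 1 X0 W (n0 + 1 + k) = fireSet (gridZ (2+e)) 1 X0 W n0 := by
      have := hconst (1 + k)
      rwa [← Nat.add_assoc] at this
    rw [e1]
    exact (hconst 1).symm

end Firefighter
end

section
/- Let H be a locally finite graph which contains a subgraph of bounded degree that is quasi-isometric to the infinite δ-regular tree for some δ ≥ 3 (the infinite tree in which every vertex has degree exactly δ). Then H does not satisfy the O(n^d)-containment property for any d ≥ 0. -/
open SimpleGraph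

namespace Firefighter

variable {V : Type*}

/-! ### Auxiliary counting lemmas -/

lemma ncard_biUnion_finset_le {α β : Type*} (t : Finset α) (f : α → Set β) :
    (⋃ a ∈ t, f a).ncard ≤ ∑ a ∈ t, (f a).ncard := by
  classical
  induction t using Finset.induction_on with
  | empty => simp
  | @insert a s ha ih =>
    rw [Finset.sum_insert ha]
    refine le_trans ?_ (Nat.add_le_add_left ih _)
    rw [show (⋃ x ∈ insert a s, f x) = f a ∪ ⋃ x ∈ s, f x by simp]
    exact Set.ncard_union_le _ _

lemma ncard_biUnion_le {α β : Type*} {s : Set α} (hs : s.Finite) (f : α → Set β) {n : ℕ}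
    (hn : ∀ a ∈ s, (f a).ncard ≤ n) : (⋃ a ∈ s, f a).ncard ≤ s.ncard * n := by
  classical
  have he : (⋃ a ∈ s, f a) = ⋃ a ∈ hs.toFinset, f a := by
    simp [Set.Finite.mem_toFinset]
  rw [he]
  refine le_trans (ncard_biUnion_finset_le _ _) ?_
  calc ∑ a ∈ hs.toFinset, (f a).ncard ≤ ∑ _a ∈ hs.toFinset, n :=
        Finset.sum_le_sum (fun a ha => hn a (hs.mem_toFinset.mp ha))
    _ = hs.toFinset.card * n := by rw [Finset.sum_const, smul_eq_mul]
    _ = s.ncard * n := by rw [Set.ncard_eq_toFinset_card _ hs]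

lemma ncard_le_mul_of_maps_to {α β : Type*} {s : Set α} {t : Set β}
    (hs : s.Finite) (ht : t.Finite) {f : α → β} (hmaps : ∀ a ∈ s, f a ∈ t) {n : ℕ}
    (hn : ∀ b, ({a ∈ s | f a = b}).ncard ≤ n) : s.ncard ≤ n * t.ncard := by
  classical
  have key := Finset.card_le_mul_card_image_of_maps_to
    (f := f) (s := hs.toFinset) (t := ht.toFinset)
    (by intro a ha; rw [Set.Finite.mem_toFinset] at ha; rw [Set.Finite.mem_toFinset];
        exact hmaps a ha) n ?_
  · rwa [Set.ncard_eq_toFinset_card _ hs, Set.ncard_eq_toFinset_card _ ht]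
  · intro b _
    have hcoe : ↑({a ∈ hs.toFinset | f a = b}) = {a ∈ s | f a = b} := by
      ext a; simp [Set.Finite.mem_toFinset]
    have : ({a ∈ hs.toFinset | f a = b}).card = ({a ∈ s | f a = b}).ncard := by
      rw [← hcoe, Set.ncard_coe_finset]
    rw [this]; exact hn b

/-- In a graph of degree bounded by `D`, balls are finite with at most `(D+1)^R` elements. -/
lemma ball_finite_ncard (G : SimpleGraph V) (D : ℕ)
    (hD : ∀ v, (G.neighborSet v).Finite ∧ (G.neighborSet v).ncard ≤ D) (x : V) :
    ∀ R : ℕ, (ball G x R).Finite ∧ (ball G x R).ncard ≤ (D + 1) ^ R := by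
  intro R
  induction R with
  | zero =>
    have hsub : ball G x 0 ⊆ {x} := by
      rintro v ⟨hr, hd⟩
      have : G.dist x v = 0 := Nat.le_zero.mp hd
      exact Set.mem_singleton_iff.mpr (hr.dist_eq_zero_iff.mp this).symm
    constructor
    · exact (Set.finite_singleton x).subset hsub
    · simpa using Set.ncard_le_ncard hsub (Set.finite_singleton x)
  | succ R ih =>
    have key : ball G x (R + 1) ⊆ ⋃ u ∈ ball G x R, ({u} ∪ G.neighborSet u) := by
      rintro v ⟨hr, hd⟩
      rcases Nat.lt_or_ge (G.dist x v) (R + 1) with h | h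
      · exact Set.mem_biUnion (⟨hr, Nat.lt_succ_iff.mp h⟩ : v ∈ ball G x R)
          (Set.mem_union_left _ rfl)
      · have hEq : G.dist x v = R + 1 := le_antisymm hd h
        obtain ⟨p, hp⟩ := hr.exists_walk_length_eq_dist
        have hlen : p.reverse.length = R + 1 := by rw [Walk.length_reverse, hp, hEq]
        have hnil : ¬ p.reverse.Nil := by rw [Walk.not_nil_iff_lt_length]; omega
        have hadj : G.Adj v (p.reverse.getVert 1) := p.reverse.adj_snd hnil
        have hq : (p.reverse.tail).reverse.length = R := by
          have := Walk.length_tail_add_one hnil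
          rw [Walk.length_reverse]; omega
        have hdu : G.dist x (p.reverse.getVert 1) ≤ R := by
          have : G.dist x (p.reverse.getVert 1) ≤ _ := dist_le ((p.reverse.tail).reverse)
          omega
        have hru : G.Reachable x (p.reverse.getVert 1) := ⟨(p.reverse.tail).reverse⟩
        exact Set.mem_biUnion (⟨hru, hdu⟩ : p.reverse.getVert 1 ∈ ball G x R)
          (Set.mem_union_right _ hadj.symm)
    have hpiece : ∀ u, ({u} ∪ G.neighborSet u).Finite := fun u =>
      (Set.finite_singleton u).union (hD u).1
    have hfin : (⋃ u ∈ ball G x R, ({u} ∪ G.neighborSet u)).Finite :=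
      Set.Finite.biUnion ih.1 (fun u _ => hpiece u)
    refine ⟨hfin.subset key, ?_⟩
    have h1 := Set.ncard_le_ncard key hfin
    have h2 := ncard_biUnion_le ih.1 (fun u => {u} ∪ G.neighborSet u)
      (n := 1 + D) (fun u _ => by
        refine le_trans (Set.ncard_union_le _ _) ?_
        have := (hD u).2
        simp only [Set.ncard_singleton]
        omega)
    calc (ball G x (R+1)).ncard ≤ _ := h1
      _ ≤ (ball G x R).ncard * (1 + D) := h2
      _ ≤ (D+1)^R * (1+D) := Nat.mul_le_mul_right _ ih.2
      _ = (D+1)^(R+1) := by ring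

/-! ### Trees: the parent function and a linear isoperimetric inequality -/

section Tree

variable {Wt : Type*} {T : SimpleGraph Wt}

/-- The unique path between two vertices in a tree. -/
noncomputable def thePath (ht : T.IsTree) (t0 v : Wt) : T.Walk t0 v :=
  ((ht.existsUnique_path t0 v).exists).choose

lemma thePath_isPath (ht : T.IsTree) (t0 v : Wt) : (thePath ht t0 v).IsPath :=
  ((ht.existsUnique_path t0 v).exists).choose_spec

lemma thePath_eq (ht : T.IsTree) {t0 v : Wt} (p : T.Walk t0 v) (hp : p.IsPath) :
    p = thePath ht t0 v :=
  (ht.existsUnique_path t0 v).unique hp (thePath_isPath ht t0 v)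

/-- The parent of a vertex with respect to a root `t0` in a tree. -/
noncomputable def par (ht : T.IsTree) (t0 v : Wt) : Wt :=
  (thePath ht t0 v).reverse.getVert 1

lemma adj_par_or (ht : T.IsTree) (t0 : Wt) {u v : Wt} (h : T.Adj u v) :
    u = par ht t0 v ∨ v = par ht t0 u := by
  classical
  by_cases hv : v ∈ (thePath ht t0 u).support
  · right
    have hpu := thePath_isPath ht t0 u
    have hd : ((thePath ht t0 u).dropUntil v hv).IsPath := hpu.dropUntil hv
    have hsingle : (Walk.cons h.symm Walk.nil : T.Walk v u).IsPath := by
      rw [Walk.cons_isPath_iff]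
      simp [h.ne']
    have hdrop : (thePath ht t0 u).dropUntil v hv = Walk.cons h.symm Walk.nil :=
      (ht.existsUnique_path v u).unique hd hsingle
    have hspec := (thePath ht t0 u).take_spec hv
    rw [hdrop] at hspec
    have hconcat : thePath ht t0 u = ((thePath ht t0 u).takeUntil v hv).concat h.symm := by
      rw [Walk.concat_eq_append]; exact hspec.symm
    rw [par, hconcat, Walk.reverse_concat, Walk.getVert_cons_succ, Walk.getVert_zero]
  · left
    have hq : (Walk.cons h.symm (thePath ht t0 u).reverse).IsPath := by
      rw [Walk.cons_isPath_iff]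
      refine ⟨(thePath_isPath ht t0 u).reverse, ?_⟩
      simpa [Walk.support_reverse] using hv
    have heq : (Walk.cons h.symm (thePath ht t0 u).reverse).reverse = thePath ht t0 v :=
      thePath_eq ht _ hq.reverse
    rw [par, ← heq, Walk.reverse_reverse, Walk.getVert_cons_succ, Walk.getVert_zero]

/-- A `δ`-regular tree with `δ ≥ 3` satisfies a linear isoperimetric inequality. -/
lemma tree_isoperimetric [DecidableEq Wt] (ht : T.IsTree) {δ : ℕ} (hδ : 3 ≤ δ)
    (hfin : ∀ w, (T.neighborSet w).Finite) (hreg : ∀ w, (T.neighborSet w).ncard = δ)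
    (S : Finset Wt) :
    S.card ≤ δ * ((S.biUnion (fun u => (hfin u).toFinset)) \ S).card := by
  classical
  obtain ⟨t0⟩ := ht.isConnected.nonempty
  set nbrF : Wt → Finset Wt := fun u => (hfin u).toFinset with hnbrF
  have hcardnbr : ∀ u, (nbrF u).card = δ := by
    intro u
    rw [hnbrF]
    rw [← Set.ncard_eq_toFinset_card _ (hfin u)]
    exact hreg u
  have hmemnbr : ∀ u v, v ∈ nbrF u ↔ T.Adj u v := by
    intro u v; rw [hnbrF]; simp [Set.Finite.mem_toFinset]
  set bd : Finset Wt := (S.biUnion nbrF) \ S with hbd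
  have hsplit : ∀ u, (nbrF u).card = ((nbrF u) ∩ S).card + ((nbrF u) \ S).card :=
    fun u => (Finset.card_inter_add_card_sdiff _ _).symm
  have hsum1 : ∑ u ∈ S, ((nbrF u) ∩ S).card ≤ 2 * S.card := by
    rw [← Finset.card_sigma]
    have hle := Finset.card_le_card_of_injOn
      (f := fun x : (Σ _ : Wt, Wt) => if x.1 = par ht t0 x.2 then (x.2, true) else (x.1, false))
      (s := S.sigma fun u => (nbrF u) ∩ S) (t := S ×ˢ (Finset.univ : Finset Bool)) ?_ ?_
    · refine le_trans hle ?_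
      rw [Finset.card_product, Finset.card_univ]
      simp [mul_comm]
    · rintro ⟨u, v⟩ hx
      rw [Finset.mem_coe, Finset.mem_sigma] at hx
      obtain ⟨huS, hv⟩ := hx
      rw [Finset.mem_inter] at hv
      dsimp only
      split_ifs with hif
      · exact Finset.mem_product.mpr ⟨hv.2, Finset.mem_univ _⟩
      · exact Finset.mem_product.mpr ⟨huS, Finset.mem_univ _⟩
    · rintro ⟨u1, v1⟩ hx ⟨u2, v2⟩ hy heq
      simp only [Finset.coe_sigma, Set.mem_sigma_iff] at hx hy
      have hadj1 : T.Adj u1 v1 := by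
        have := hx.2; rw [Finset.mem_coe, Finset.mem_inter] at this
        exact (hmemnbr u1 v1).mp this.1
      have hadj2 : T.Adj u2 v2 := by
        have := hy.2; rw [Finset.mem_coe, Finset.mem_inter] at this
        exact (hmemnbr u2 v2).mp this.1
      dsimp only at heq
      split_ifs at heq with h1 h2 h2 <;> simp only [Prod.mk.injEq] at heq
      · obtain ⟨he, -⟩ := heq
        subst he
        have h12 : u1 = u2 := by rw [h1, h2]
        subst h12; rfl
      · exact absurd heq.2 (by simp)
      · exact absurd heq.2 (by simp)
      · have hv1 : v1 = par ht t0 u1 := (adj_par_or ht t0 hadj1).resolve_left h1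
        have hv2 : v2 = par ht t0 u2 := (adj_par_or ht t0 hadj2).resolve_left h2
        obtain ⟨he, -⟩ := heq
        have h12 : v1 = v2 := by rw [hv1, hv2, he]
        subst he; subst h12; rfl
  have hsum2 : ∑ u ∈ S, ((nbrF u) \ S).card ≤ δ * bd.card := by
    rw [← Finset.card_sigma]
    have hle := Finset.card_le_card_of_injOn
      (f := fun x : (Σ _ : Wt, Wt) => (⟨x.2, x.1⟩ : Σ _ : Wt, Wt))
      (s := S.sigma fun u => (nbrF u) \ S) (t := bd.sigma fun w => nbrF w) ?_ ?_
    · refine le_trans hle (le_of_eq ?_)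
      rw [Finset.card_sigma]
      calc ∑ w ∈ bd, (nbrF w).card = ∑ _w ∈ bd, δ := Finset.sum_congr rfl (fun w _ => hcardnbr w)
        _ = bd.card * δ := by rw [Finset.sum_const, smul_eq_mul]
        _ = δ * bd.card := mul_comm _ _
    · rintro ⟨u, v⟩ hx
      rw [Finset.mem_coe, Finset.mem_sigma] at hx
      obtain ⟨huS, hv⟩ := hx
      rw [Finset.mem_sdiff] at hv
      rw [Finset.mem_coe, Finset.mem_sigma]
      refine ⟨?_, (hmemnbr v u).mpr ((hmemnbr u v).mp hv.1).symm⟩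
      rw [hbd, Finset.mem_sdiff]
      exact ⟨Finset.mem_biUnion.mpr ⟨u, huS, hv.1⟩, hv.2⟩
    · rintro ⟨u1, v1⟩ _ ⟨u2, v2⟩ _ heq
      dsimp only at heq
      simp only [Sigma.ext_iff, heq_eq_eq] at heq
      obtain ⟨h1, h2⟩ := heq
      subst h1; subst h2; rfl
  have htotal : δ * S.card = ∑ u ∈ S, (nbrF u).card := by
    calc δ * S.card = S.card * δ := mul_comm _ _
      _ = ∑ _u ∈ S, δ := by rw [Finset.sum_const, smul_eq_mul]
      _ = ∑ u ∈ S, (nbrF u).card := Finset.sum_congr rfl (fun u _ => (hcardnbr u).symm)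
  have hsumsplit : ∑ u ∈ S, (nbrF u).card
      = ∑ u ∈ S, ((nbrF u) ∩ S).card + ∑ u ∈ S, ((nbrF u) \ S).card := by
    rw [← Finset.sum_add_distrib]
    exact Finset.sum_congr rfl (fun u _ => hsplit u)
  have hmain : δ * S.card ≤ 2 * S.card + δ * bd.card := by
    rw [htotal, hsumsplit]; exact Nat.add_le_add hsum1 hsum2
  have h3 : 3 * S.card ≤ δ * S.card := Nat.mul_le_mul_right _ hδ
  have hfin2 : S.card + 2 * S.card ≤ δ * bd.card + 2 * S.card := by
    calc S.card + 2 * S.card = 3 * S.card := by ring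
      _ ≤ δ * S.card := h3
      _ ≤ 2 * S.card + δ * bd.card := hmain
      _ = δ * bd.card + 2 * S.card := by ring
  exact le_of_add_le_add_right hfin2

end Tree

/-! ### Properties of graphs quasi-isometric to regular trees -/

section QI

variable {U Wt : Type*} {Γ : SimpleGraph U} {T : SimpleGraph Wt} {δT : ℕ}

lemma qi_connected [Infinite Wt] (hconn : T.Connected)
    (hTfin : ∀ w, (T.neighborSet w).Finite ∧ (T.neighborSet w).ncard ≤ δT)
    (hqi : QuasiIsometric Γ T) : Γ.Connected := by
  obtain ⟨c, hc, φ, ψ, hφ, hψ, hgψφ, hhφψ⟩ := hqi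
  rw [connected_iff]
  have hballs := ball_finite_ncard T δT hTfin
  refine ⟨?_, ⟨ψ (Classical.arbitrary Wt)⟩⟩
  intro g1 g2
  by_contra hn
  have hsub : (Set.univ : Set Wt) ⊆ ball T (φ g1) (2 * c) ∪ ball T (φ g2) (2 * c) := by
    intro t _
    have hkey : ∀ g : U, ¬ Γ.Reachable g (ψ t) → t ∈ ball T (φ g) (2 * c) := by
      intro g hg
      have hd0 : Γ.dist g (ψ t) = 0 :=
        SimpleGraph.dist_eq_zero_iff_eq_or_not_reachable.mpr (Or.inr hg)
      have h1 : T.dist (φ g) (φ (ψ t)) ≤ c := by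
        have := hφ g (ψ t)
        rw [hd0] at this
        simpa using this
      have h2 : T.dist (φ (ψ t)) t ≤ c := by
        rw [SimpleGraph.dist_comm]
        exact hhφψ t
      have h3 : T.dist (φ g) t ≤ 2 * c := by
        have := hconn.dist_triangle (u := φ g) (v := φ (ψ t)) (w := t)
        omega
      exact ⟨hconn.preconnected _ _, h3⟩
    by_cases hr : Γ.Reachable g1 (ψ t)
    · refine Set.mem_union_right _ (hkey g2 ?_)
      exact fun h => hn (hr.trans h.symm)
    · exact Set.mem_union_left _ (hkey g1 hr)
  have hfin : (Set.univ : Set Wt).Finite :=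
    ((hballs (φ g1) (2*c)).1.union ((hballs (φ g2) (2*c)).1)).subset hsub
  exact Set.infinite_univ hfin

lemma qi_infinite [Infinite Wt] (hconn : T.Connected)
    (hTfin : ∀ w, (T.neighborSet w).Finite ∧ (T.neighborSet w).ncard ≤ δT)
    (hqi : QuasiIsometric Γ T) : Infinite U := by
  obtain ⟨c, hc, φ, ψ, hφ, hψ, hgψφ, hhφψ⟩ := hqi
  have hballs := ball_finite_ncard T δT hTfin
  by_contra hinf
  rw [not_infinite_iff_finite] at hinf
  have hfib : ∀ u : U, {t : Wt | ψ t = u}.Finite := by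
    intro u
    rcases Set.eq_empty_or_nonempty {t : Wt | ψ t = u} with he | ⟨t0, ht0⟩
    · rw [he]; exact Set.finite_empty
    · refine ((hballs t0 (2*c)).1).subset ?_
      intro t ht
      have heq : φ (ψ t) = φ (ψ t0) := by
        rw [ht, ht0]
      have h1 : T.dist t0 (φ (ψ t0)) ≤ c := hhφψ t0
      have h2 : T.dist (φ (ψ t)) t ≤ c := by rw [SimpleGraph.dist_comm]; exact hhφψ t
      have h3 : T.dist t0 t ≤ 2 * c := by
        rw [heq] at h2
        have := hconn.dist_triangle (u := t0) (v := φ (ψ t0)) (w := t)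
        omega
      exact ⟨hconn.preconnected _ _, h3⟩
  have : (Set.univ : Set Wt).Finite := by
    have hcov : (Set.univ : Set Wt) = ⋃ u : U, {t : Wt | ψ t = u} := by
      ext t; simp
    rw [hcov]
    exact Set.finite_iUnion hfib
  exact Set.infinite_univ this

lemma exists_boundary {S : Set U} : ∀ {a b : U} (p : Γ.Walk a b), a ∉ S → b ∈ S →
    ∃ x ∈ p.support, x ∉ S ∧ ∃ u ∈ S, Γ.Adj u x := by
  intro a b p
  induction p with
  | nil => intro ha hb; exact absurd hb ha
  | @cons a a' b hadj q ih =>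
    intro ha hb
    by_cases ha' : a' ∈ S
    · exact ⟨a, Walk.start_mem_support _, ha, a', ha', hadj.symm⟩
    · obtain ⟨x, hxsup, hx⟩ := ih ha' hb
      exact ⟨x, by rw [Walk.support_cons]; exact List.mem_cons_of_mem _ hxsup, hx⟩

/-- A bounded-degree graph quasi-isometric to a `δ`-regular tree (`δ ≥ 3`) satisfies a linear
isoperimetric inequality. -/
lemma qi_nonamenable (hconn : T.Connected) (hacyc : T.IsAcyclic)
    {δ : ℕ} (hδ : 3 ≤ δ) (hreg : ∀ w, (T.neighborSet w).ncard = δ)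
    {D : ℕ} (hbd : ∀ v, (Γ.neighborSet v).Finite ∧ (Γ.neighborSet v).ncard ≤ D)
    (hΓc : Γ.Connected) (hqi : QuasiIsometric Γ T) :
    ∃ K : ℕ, 1 ≤ K ∧ ∀ S : Set U, S.Finite →
      S.ncard ≤ K * {v | v ∉ S ∧ ∃ u ∈ S, Γ.Adj u v}.ncard := by
  classical
  obtain ⟨c, hc, φ, ψ, hφ, hψ, hgψφ, hhφψ⟩ := hqi
  have ht : T.IsTree := ⟨hconn, hacyc⟩
  have hTfin : ∀ w, (T.neighborSet w).Finite := by
    intro w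
    by_contra hinf
    have := (Set.Infinite.ncard hinf)
    rw [hreg w] at this
    omega
  have hTbd : ∀ w, (T.neighborSet w).Finite ∧ (T.neighborSet w).ncard ≤ δ :=
    fun w => ⟨hTfin w, le_of_eq (hreg w)⟩
  have hTballs := ball_finite_ncard T δ hTbd
  have hΓballs := ball_finite_ncard Γ D hbd
  set F := (D + 1) ^ (2 * c) with hF
  set L := 3 * c^2 + 3 * c with hL
  set R2 := 2 * L * c + 3 * c with hR2
  set M2 := (δ + 1) ^ R2 with hM2
  refine ⟨F * (δ * M2), ?_, ?_⟩
  · have h1 : 1 ≤ F := Nat.one_le_pow _ _ (by omega)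
    have h2 : 1 ≤ M2 := Nat.one_le_pow _ _ (by omega)
    have h3 : 1 * 1 ≤ δ * M2 := Nat.mul_le_mul (by omega) h2
    have h4 : 1 * 1 ≤ F * (δ * M2) := Nat.mul_le_mul h1 (by omega)
    omega
  intro S hS
  set bdΓ : Set U := {v | v ∉ S ∧ ∃ u ∈ S, Γ.Adj u v} with hbdΓ
  have hbdΓfin : bdΓ.Finite := by
    refine Set.Finite.subset (Set.Finite.biUnion hS (fun u _ => (hbd u).1)) ?_
    rintro v ⟨-, u, huS, hadj⟩
    exact Set.mem_biUnion huS hadj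
  set Shat : Set Wt := ⋃ s ∈ S, ball T (φ s) (3 * c) with hShat
  have hShatfin : Shat.Finite := Set.Finite.biUnion hS (fun s _ => (hTballs (φ s) (3*c)).1)
  have hstepa : S.ncard ≤ F * (φ '' S).ncard := by
    refine ncard_le_mul_of_maps_to hS (hS.image φ) (fun a ha => Set.mem_image_of_mem φ ha) ?_
    intro b
    rcases Set.eq_empty_or_nonempty {a ∈ S | φ a = b} with he | ⟨a0, ha0S, ha0⟩
    · rw [he]; simp
    · have hsub : {a ∈ S | φ a = b} ⊆ ball Γ a0 (2 * c) := by
        rintro a ⟨haS, hab⟩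
        have heq : ψ (φ a0) = ψ (φ a) := by rw [ha0, hab]
        have h1 : Γ.dist a0 (ψ (φ a0)) ≤ c := hgψφ a0
        have h2 : Γ.dist (ψ (φ a0)) a ≤ c := by
          rw [heq, SimpleGraph.dist_comm]
          exact hgψφ a
        have h3 := hΓc.dist_triangle (u := a0) (v := ψ (φ a0)) (w := a)
        exact ⟨hΓc.preconnected _ _, by omega⟩
      exact le_trans (Set.ncard_le_ncard hsub (hΓballs a0 (2*c)).1) (hΓballs a0 (2*c)).2
  have hstepb : (φ '' S).ncard ≤ Shat.ncard := by
    refine Set.ncard_le_ncard ?_ hShatfin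
    rintro b ⟨s, hsS, rfl⟩
    exact Set.mem_biUnion hsS ⟨Reachable.refl _, by rw [SimpleGraph.dist_self]; omega⟩
  set bdT : Set Wt := {t | t ∉ Shat ∧ ∃ t' ∈ Shat, T.Adj t' t} with hbdT
  have hcoe : ↑((hShatfin.toFinset.biUnion (fun u => (hTfin u).toFinset)) \ hShatfin.toFinset)
      = bdT := by
    ext t
    simp only [Finset.coe_sdiff, Set.mem_diff, Finset.mem_coe, Finset.mem_biUnion,
      Set.Finite.mem_toFinset, hbdT, Set.mem_setOf_eq]
    constructor
    · rintro ⟨⟨t', ht', hadj⟩, htn⟩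
      exact ⟨htn, t', ht', by rwa [SimpleGraph.mem_neighborSet] at hadj⟩
    · rintro ⟨htn, t', ht', hadj⟩
      exact ⟨⟨t', ht', by rwa [SimpleGraph.mem_neighborSet]⟩, htn⟩
  have hbdTfin : bdT.Finite := by
    rw [← hcoe]; exact Finset.finite_toSet _
  have hstepc : Shat.ncard ≤ δ * bdT.ncard := by
    have := tree_isoperimetric ht hδ hTfin hreg hShatfin.toFinset
    rwa [Set.ncard_eq_toFinset_card _ hShatfin, ← hcoe, Set.ncard_coe_finset]
  have hkey : ∀ t ∈ bdT, ∃ b, b ∈ bdΓ ∧ Γ.dist (ψ t) b ≤ L := by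
    rintro t ⟨htn, t', ht'S, hadj⟩
    rw [hShat] at ht'S
    obtain ⟨s, hsS, hrt', hdt'⟩ := by
      rw [Set.mem_iUnion₂] at ht'S; exact ht'S
    have hdt : T.dist (φ s) t ≤ 3 * c + 1 := by
      have htri := hconn.dist_triangle (u := φ s) (v := t') (w := t)
      have h1 : T.dist t' t ≤ 1 := dist_le (Walk.cons hadj Walk.nil)
      omega
    have hψnotS : ψ t ∉ S := by
      intro hmem
      have hnot : t ∉ ball T (φ (ψ t)) (3 * c) := by
        intro hball
        exact htn (Set.mem_biUnion hmem hball)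
      have h2 : T.dist (φ (ψ t)) t ≤ c := by rw [SimpleGraph.dist_comm]; exact hhφψ t
      exact hnot ⟨hconn.preconnected _ _, by omega⟩
    have hdistΓ : Γ.dist (ψ t) s ≤ L := by
      have h1 : Γ.dist (ψ t) (ψ (φ s)) ≤ c * T.dist t (φ s) + c := hψ t (φ s)
      have h2 : T.dist t (φ s) ≤ 3 * c + 1 := by rwa [SimpleGraph.dist_comm]
      have h3 : Γ.dist (ψ (φ s)) s ≤ c := by rw [SimpleGraph.dist_comm]; exact hgψφ s
      have htri := hΓc.dist_triangle (u := ψ t) (v := ψ (φ s)) (w := s)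
      have : c * T.dist t (φ s) ≤ c * (3 * c + 1) := Nat.mul_le_mul_left _ h2
      rw [hL]; nlinarith
    obtain ⟨p, hp⟩ := (hΓc.preconnected (ψ t) s).exists_walk_length_eq_dist
    obtain ⟨x, hxsup, hxn, u, huS, hadjux⟩ := exists_boundary p hψnotS hsS
    refine ⟨x, ⟨hxn, u, huS, hadjux⟩, ?_⟩
    have h5 : Γ.dist (ψ t) x ≤ p.length := by
      have := dist_le (p.takeUntil x hxsup)
      have := Walk.length_takeUntil_le p hxsup
      omega
    omega
  set f : Wt → U := fun t => if h : ∃ b, b ∈ bdΓ ∧ Γ.dist (ψ t) b ≤ L then h.choose else ψ t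
    with hf
  have hfP : ∀ t ∈ bdT, f t ∈ bdΓ ∧ Γ.dist (ψ t) (f t) ≤ L := by
    intro t htmem
    have h := hkey t htmem
    rw [hf]
    simp only [dif_pos h]
    exact h.choose_spec
  have hstepd : bdT.ncard ≤ M2 * bdΓ.ncard := by
    refine ncard_le_mul_of_maps_to hbdTfin hbdΓfin (fun t ht => (hfP t ht).1) ?_
    intro b
    rcases Set.eq_empty_or_nonempty {t ∈ bdT | f t = b} with he | ⟨t1, ht1mem, ht1⟩
    · rw [he]; simp
    · have hsub : {t ∈ bdT | f t = b} ⊆ ball T t1 R2 := by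
        rintro t ⟨htmem, htb⟩
        obtain ⟨-, hd1⟩ := hfP t1 ht1mem
        obtain ⟨-, hd2⟩ := hfP t htmem
        rw [ht1] at hd1
        rw [htb] at hd2
        have hψd : Γ.dist (ψ t1) (ψ t) ≤ 2 * L := by
          have h2 : Γ.dist b (ψ t) ≤ L := by rwa [SimpleGraph.dist_comm]
          have := hΓc.dist_triangle (u := ψ t1) (v := b) (w := ψ t)
          omega
        have h1 : T.dist t1 (φ (ψ t1)) ≤ c := hhφψ t1
        have h2 : T.dist (φ (ψ t1)) (φ (ψ t)) ≤ c * (2 * L) + c := by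
          have := hφ (ψ t1) (ψ t)
          have hm : c * Γ.dist (ψ t1) (ψ t) ≤ c * (2 * L) := Nat.mul_le_mul_left _ hψd
          omega
        have h3 : T.dist (φ (ψ t)) t ≤ c := by rw [SimpleGraph.dist_comm]; exact hhφψ t
        have htri1 := hconn.dist_triangle (u := t1) (v := φ (ψ t1)) (w := t)
        have htri2 := hconn.dist_triangle (u := φ (ψ t1)) (v := φ (ψ t)) (w := t)
        refine ⟨hconn.preconnected _ _, ?_⟩
        rw [hR2]; nlinarith
      exact le_trans (Set.ncard_le_ncard hsub (hTballs t1 R2).1) (hTballs t1 R2).2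
  calc S.ncard ≤ F * (φ '' S).ncard := hstepa
    _ ≤ F * Shat.ncard := Nat.mul_le_mul_left _ hstepb
    _ ≤ F * (δ * bdT.ncard) := Nat.mul_le_mul_left _ hstepc
    _ ≤ F * (δ * (M2 * bdΓ.ncard)) := by
        refine Nat.mul_le_mul_left _ (Nat.mul_le_mul_left _ hstepd)
    _ = F * (δ * M2) * bdΓ.ncard := by ring

end QI

/-! ### Basic properties of fire sets -/

section Fire

variable {H : SimpleGraph V} {X0 : Set V} {Wf : ℕ → Set V}

lemma fire_avoid {n : ℕ} {v : V} (hv : v ∈ fireSet H 1 X0 Wf n) :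
    ∀ i, 1 ≤ i → i ≤ n → v ∉ Wf i := by
  cases n with
  | zero => intro i h1 h0; omega
  | succ n =>
    obtain ⟨u, hu, p, hlen, havoid⟩ := hv
    exact fun i h1 hn => havoid v (Walk.end_mem_support p) i h1 hn

lemma fire_mono (hdis : ∀ n, Disjoint (fireSet H 1 X0 Wf n) (Wf (n + 1))) (n : ℕ) :
    fireSet H 1 X0 Wf n ⊆ fireSet H 1 X0 Wf (n + 1) := by
  intro v hv
  refine ⟨v, hv, Walk.nil, by simp, ?_⟩
  intro w hw i h1 hn
  rw [Walk.support_nil, List.mem_singleton] at hw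
  subst hw
  rcases Nat.lt_or_ge i (n + 1) with h | h
  · exact fire_avoid hv i h1 (by omega)
  · have : i = n + 1 := by omega
    subst this
    exact fun hmem => (Set.disjoint_left.mp (hdis n)) hv hmem

lemma fire_spread (hdis : ∀ n, Disjoint (fireSet H 1 X0 Wf n) (Wf (n + 1))) {n : ℕ} {u v : V}
    (hu : u ∈ fireSet H 1 X0 Wf n) (hadj : H.Adj u v)
    (hv : ∀ i, 1 ≤ i → i ≤ n + 1 → v ∉ Wf i) : v ∈ fireSet H 1 X0 Wf (n + 1) := by
  refine ⟨u, hu, Walk.cons hadj Walk.nil, by simp, ?_⟩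
  intro w hw i h1 hn
  rw [Walk.support_cons, Walk.support_nil, List.mem_cons] at hw
  rcases hw with rfl | hw
  · rcases Nat.lt_or_ge i (n + 1) with h | h
    · exact fire_avoid hu i h1 (by omega)
    · have : i = n + 1 := by omega
      subst this
      exact fun hmem => (Set.disjoint_left.mp (hdis n)) hu hmem
  · rw [List.mem_singleton] at hw
    subst hw
    exact hv i h1 hn

lemma fire_step_subset (n : ℕ) :
    fireSet H 1 X0 Wf (n + 1) ⊆ fireSet H 1 X0 Wf n ∪ ⋃ u ∈ fireSet H 1 X0 Wf n,
      H.neighborSet u := by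
  rintro v ⟨u, hu, p, hlen, -⟩
  cases p with
  | nil => exact Set.mem_union_left _ hu
  | cons hadj q =>
    have hq : q.length = 0 := by
      have := Walk.length_cons hadj q
      omega
    have := Walk.eq_of_length_eq_zero hq
    subst this
    exact Set.mem_union_right _ (Set.mem_biUnion hu hadj)

lemma fire_finite (hlf : ∀ v, (H.neighborSet v).Finite) (hX0 : X0.Finite) (n : ℕ) :
    (fireSet H 1 X0 Wf n).Finite := by
  induction n with
  | zero => exact hX0
  | succ n ih =>
    refine Set.Finite.subset ?_ (fire_step_subset n)
    exact ih.union (Set.Finite.biUnion ih (fun u _ => hlf u))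

end Fire

/-! ### A geometric growth bound -/

open Filter in
lemma exists_geom_bound (K c0 d : ℕ) (hK : 1 ≤ K) :
    ∃ B : ℕ, 1 ≤ B ∧ ∀ n : ℕ,
      (2*K : ℝ) * (c0 * (n+1)^(d+1)) ≤ (B : ℝ) * (1 + 1/(2*K))^n := by
  set r : ℝ := 1 + 1/(2*K) with hr
  have hK0 : (0:ℝ) < 2*K := by positivity
  have hr1 : 1 < r := by
    have : (0:ℝ) < 1/(2*K) := by positivity
    rw [hr]; linarith
  have hr0 : (0:ℝ) < r := by linarith
  have hx1 : ‖r⁻¹‖ < 1 := by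
    rw [Real.norm_eq_abs, abs_of_pos (by positivity)]
    exact inv_lt_one_of_one_lt₀ hr1
  have hsum : Summable (fun n : ℕ => (n:ℝ)^(d+1) * (r⁻¹)^n) :=
    summable_pow_mul_geometric_of_norm_lt_one (d+1) hx1
  obtain ⟨M, hM⟩ := hsum.tendsto_atTop_zero.bddAbove_range
  have hMn : ∀ n : ℕ, (n:ℝ)^(d+1) * (r⁻¹)^n ≤ M := fun n => hM (Set.mem_range_self n)
  refine ⟨max 1 (Nat.ceil ((2*K) * c0 * M * r)), le_max_left _ _, ?_⟩
  intro n
  have h1 : ((n+1:ℝ))^(d+1) * (r⁻¹)^(n+1) ≤ M := by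
    have := hMn (n+1); push_cast at this ⊢; exact this
  have hrn : (0:ℝ) < r^(n+1) := pow_pos hr0 _
  have h2 : ((n+1:ℝ))^(d+1) ≤ M * r^(n+1) := by
    have hmul := mul_le_mul_of_nonneg_right h1 (le_of_lt hrn)
    rwa [mul_assoc, ← mul_pow, inv_mul_cancel₀ (ne_of_gt hr0), one_pow, mul_one] at hmul
  have h3 : (2*K : ℝ) * (c0 * (n+1)^(d+1)) ≤ (2*K*c0*M*r) * r^n := by
    have hc0 : (0:ℝ) ≤ (2*K)*c0 := by positivity
    calc (2*K : ℝ) * (c0 * (n+1)^(d+1)) = ((2*K)*c0) * ((n+1:ℝ))^(d+1) := by ring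
      _ ≤ ((2*K)*c0) * (M * r^(n+1)) := mul_le_mul_of_nonneg_left h2 hc0
      _ = (2*K*c0*M*r) * r^n := by ring
  refine le_trans h3 ?_
  have h4 : (2*K*c0*M*r : ℝ) ≤ (max 1 (Nat.ceil ((2*K) * c0 * M * r)) : ℕ) := by
    have := Nat.le_ceil ((2*K) * c0 * M * r)
    have h5 : ((Nat.ceil ((2*K) * c0 * M * r) : ℕ) : ℝ)
        ≤ ((max 1 (Nat.ceil ((2*K) * c0 * M * r)) : ℕ) : ℝ) := by
      exact_mod_cast Nat.cast_le.mpr (le_max_right _ _)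
    linarith
  exact mul_le_mul_of_nonneg_right h4 (le_of_lt (pow_pos hr0 n))

/-- if a locally finite graph `H` contains a bounded degree subgraph which is
quasi-isometric to the infinite `δ`-regular tree with `δ ≥ 3`, then `H` does not satisfy a
polynomial containment property. -/
theorem stmt19 {V : Type*} (H : SimpleGraph V) (hlf : LocallyFiniteGraph H)
    (delta : ℕ) (hdelta : 3 ≤ delta)
    (htree : ∃ (W : Type) (T : SimpleGraph W) (G : H.Subgraph),
      Infinite W ∧ T.Connected ∧ T.IsAcyclic ∧
      (∀ w : W, (T.neighborSet w).ncard = delta) ∧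
      BoundedDegree G.coe ∧ QuasiIsometric G.coe T) :
    ∀ d : ℕ, ¬ ∃ c : ℕ, 1 ≤ c ∧ HasContainmentProperty H 1 (fun n => c * n ^ d) := by
  intro d
  rintro ⟨c0, hc0, hcont⟩
  obtain ⟨Wt, T, G, hWinf, hTconn, hTacyc, hreg, ⟨D, hD⟩, hqi⟩ := htree
  haveI := hWinf
  have hTbd : ∀ w, (T.neighborSet w).Finite ∧ (T.neighborSet w).ncard ≤ delta := by
    intro w
    have hfin : (T.neighborSet w).Finite := by
      by_contra hinf
      have := Set.Infinite.ncard hinf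
      rw [hreg w] at this; omega
    exact ⟨hfin, le_of_eq (hreg w)⟩
  have hΓc : G.coe.Connected := qi_connected hTconn hTbd hqi
  have hUinf : Infinite ↥G.verts := qi_infinite hTconn hTbd hqi
  have hvertsinf : G.verts.Infinite := Set.infinite_coe_iff.mp hUinf
  obtain ⟨K, hK1, hKnon⟩ := qi_nonamenable hTconn hTacyc hdelta hreg hD hΓc hqi
  -- transfer the isoperimetric inequality to subsets of `G.verts` inside `V`
  have hKnonV : ∀ S : Set V, S.Finite → S ⊆ G.verts →
      S.ncard ≤ K * {v | v ∈ G.verts ∧ v ∉ S ∧ ∃ u ∈ S, G.Adj u v}.ncard := by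
    intro S hSfin hSsub
    set S' : Set ↥G.verts := Subtype.val ⁻¹' S with hS'
    have hS'fin : S'.Finite := hSfin.preimage Subtype.val_injective.injOn
    have himgS : Subtype.val '' S' = S := by
      ext v
      constructor
      · rintro ⟨x, hx, rfl⟩; exact hx
      · intro hv; exact ⟨⟨v, hSsub hv⟩, hv, rfl⟩
    have hcardS : S'.ncard = S.ncard := by
      rw [← himgS, Set.ncard_image_of_injective _ Subtype.val_injective]
    have himgbd : Subtype.val '' {v | v ∉ S' ∧ ∃ u ∈ S', G.coe.Adj u v}
        = {v | v ∈ G.verts ∧ v ∉ S ∧ ∃ u ∈ S, G.Adj u v} := by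
      ext v
      constructor
      · rintro ⟨x, ⟨hxn, u, huS', hadj⟩, rfl⟩
        exact ⟨x.2, hxn, ↑u, huS', hadj⟩
      · rintro ⟨hvverts, hvn, u, huS, hadj⟩
        exact ⟨⟨v, hvverts⟩, ⟨hvn, ⟨u, hSsub huS⟩, huS, hadj⟩, rfl⟩
    have hbdcard : {v | v ∉ S' ∧ ∃ u ∈ S', G.coe.Adj u v}.ncard
        = {v | v ∈ G.verts ∧ v ∉ S ∧ ∃ u ∈ S, G.Adj u v}.ncard := by
      rw [← himgbd, Set.ncard_image_of_injective _ Subtype.val_injective]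
    have := hKnon S' hS'fin
    rwa [hcardS, hbdcard] at this
  -- choose the initial fire
  obtain ⟨B, hB1, hBbound⟩ := exists_geom_bound K c0 d hK1
  obtain ⟨S0, hS0sub, hS0fin, hS0card⟩ := hvertsinf.exists_subset_ncard_eq B
  obtain ⟨Wstrat, hWcard, hWdis, N, hN0, hstab⟩ := hcont S0 hS0fin
  set r : ℝ := 1 + 1/(2*K) with hr
  have hK0R : (0:ℝ) < 2*K := by positivity
  have hr1 : (1:ℝ) < r := by
    have : (0:ℝ) < 1/(2*K) := by positivity
    rw [hr]; linarith
  have hr0 : (0:ℝ) < r := by linarith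
  have hXfin : ∀ n, (fireSet H 1 S0 Wstrat n).Finite := fun n => fire_finite hlf hS0fin n
  set Sn : ℕ → Set V := fun n => fireSet H 1 S0 Wstrat n ∩ G.verts with hSn
  set bdS : ℕ → Set V := fun n => {v | v ∈ G.verts ∧ v ∉ Sn n ∧ ∃ u ∈ Sn n, G.Adj u v} with hbdS
  set A : ℕ → Set V := fun n => ⋃ i ∈ Finset.Icc 1 n, Wstrat i with hA
  have hSnfin : ∀ n, (Sn n).Finite := fun n => (hXfin n).inter_of_left _
  have hSnsub : ∀ n, Sn n ⊆ G.verts := fun n => Set.inter_subset_right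
  have hbdfin : ∀ n, (bdS n).Finite := by
    intro n
    refine Set.Finite.subset (Set.Finite.biUnion (hSnfin n) (fun u _ => hlf u)) ?_
    rintro v ⟨hvverts, hvn, u, huS, hadj⟩
    exact Set.mem_biUnion huS (G.adj_sub hadj)
  have hAfin : ∀ n, (A n).Finite := by
    intro n
    rw [hA]
    apply Set.Finite.biUnion (Set.finite_mem_finset (Finset.Icc 1 n))
    intro i hi
    simp only [Set.mem_setOf_eq, Finset.mem_Icc] at hi
    exact (hWcard i hi.1).1
  have hAcard : ∀ n, (A n).ncard ≤ c0 * n^(d+1) := by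
    intro n
    refine le_trans (ncard_biUnion_finset_le (Finset.Icc 1 n) _) ?_
    calc ∑ i ∈ Finset.Icc 1 n, (Wstrat i).ncard ≤ ∑ i ∈ Finset.Icc 1 n, c0 * n^d := by
          refine Finset.sum_le_sum ?_
          intro i hi
          rw [Finset.mem_Icc] at hi
          exact le_trans (hWcard i hi.1).2 (Nat.mul_le_mul_left _ (Nat.pow_le_pow_left hi.2 d))
      _ = (Finset.Icc 1 n).card * (c0 * n^d) := by rw [Finset.sum_const, smul_eq_mul]
      _ ≤ n * (c0 * n^d) := by
          have hcard : (Finset.Icc 1 n).card = n := by rw [Nat.card_Icc]; omega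
          rw [hcard]
      _ = c0 * n^(d+1) := by ring
  -- the combinatorial expansion step
  have hcomb : ∀ n, (Sn n).ncard + (bdS n).ncard ≤ (Sn (n+1)).ncard + (A (n+1)).ncard := by
    intro n
    have hsub : Sn n ∪ bdS n ⊆ Sn (n+1) ∪ A (n+1) := by
      rintro v (hv | hv)
      · exact Or.inl ⟨fire_mono hWdis n hv.1, hv.2⟩
      · obtain ⟨hvverts, hvn, u, huS, hadj⟩ := hv
        by_cases hv2 : ∀ i, 1 ≤ i → i ≤ n + 1 → v ∉ Wstrat i
        · exact Or.inl ⟨fire_spread hWdis huS.1 (G.adj_sub hadj) hv2, hvverts⟩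
        · push_neg at hv2
          obtain ⟨i, h1, h2, h3⟩ := hv2
          exact Or.inr (Set.mem_iUnion₂.mpr ⟨i, Finset.mem_Icc.mpr ⟨h1, h2⟩, h3⟩)
    have hdisj : Disjoint (Sn n) (bdS n) := by
      rw [Set.disjoint_left]
      rintro v hv ⟨-, hvn, -⟩
      exact hvn hv
    calc (Sn n).ncard + (bdS n).ncard = (Sn n ∪ bdS n).ncard :=
          (Set.ncard_union_eq hdisj (hSnfin n) (hbdfin n)).symm
      _ ≤ (Sn (n+1) ∪ A (n+1)).ncard :=
          Set.ncard_le_ncard hsub ((hSnfin _).union (hAfin _))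
      _ ≤ (Sn (n+1)).ncard + (A (n+1)).ncard := Set.ncard_union_le _ _
  have hKstep : ∀ n, (Sn n).ncard ≤ K * (bdS n).ncard :=
    fun n => hKnonV (Sn n) (hSnfin n) (hSnsub n)
  -- geometric growth of the fire inside G.verts
  have hgrowth : ∀ n, (B:ℝ) * r^n ≤ ((Sn n).ncard : ℝ) := by
    intro n
    induction n with
    | zero =>
      have h0 : Sn 0 = S0 := by
        rw [hSn]
        show fireSet H 1 S0 Wstrat 0 ∩ G.verts = S0
        rw [show fireSet H 1 S0 Wstrat 0 = S0 from rfl]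
        exact Set.inter_eq_self_of_subset_left hS0sub
      rw [h0, hS0card]
      simp
    | succ n ih =>
      have hcombR : ((Sn n).ncard : ℝ) + ((bdS n).ncard : ℝ)
          ≤ ((Sn (n+1)).ncard : ℝ) + ((A (n+1)).ncard : ℝ) := by
        exact_mod_cast hcomb n
      have hKR : ((Sn n).ncard : ℝ) ≤ (K:ℝ) * ((bdS n).ncard : ℝ) := by
        exact_mod_cast hKstep n
      have haR : ((A (n+1)).ncard : ℝ) ≤ (c0:ℝ) * ((n+1:ℝ))^(d+1) := by
        have := hAcard (n+1)
        have hcast : (((A (n+1)).ncard : ℕ) : ℝ) ≤ ((c0 * (n+1)^(d+1) : ℕ) : ℝ) := by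
          exact_mod_cast this
        push_cast at hcast
        convert hcast using 2
      have hBn : (2*K : ℝ) * ((c0:ℝ) * ((n+1:ℝ))^(d+1)) ≤ (B:ℝ) * r^n := by
        have := hBbound n
        push_cast at this
        convert this using 2
      have e3 : (2*K : ℝ) * ((A (n+1)).ncard : ℝ) ≤ (B:ℝ) * r^n := by
        refine le_trans ?_ hBn
        exact mul_le_mul_of_nonneg_left haR (le_of_lt hK0R)
      have e1 : (2*K : ℝ) * (((Sn n).ncard : ℝ) + ((bdS n).ncard : ℝ))
          ≤ (2*K : ℝ) * (((Sn (n+1)).ncard : ℝ) + ((A (n+1)).ncard : ℝ)) :=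
        mul_le_mul_of_nonneg_left hcombR (le_of_lt hK0R)
      have e2 : 2 * ((Sn n).ncard : ℝ) ≤ (2*K : ℝ) * ((bdS n).ncard : ℝ) := by
        calc 2 * ((Sn n).ncard : ℝ) ≤ 2 * ((K:ℝ) * ((bdS n).ncard : ℝ)) := by linarith
          _ = (2*K:ℝ) * ((bdS n).ncard : ℝ) := by ring
      have e5 : (2*K : ℝ) * ((B:ℝ) * r^n) ≤ (2*K : ℝ) * ((Sn n).ncard : ℝ) :=
        mul_le_mul_of_nonneg_left ih (le_of_lt hK0R)
      have h2Kr : (2*K : ℝ) * r = 2*K + 1 := by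
        rw [hr]
        field_simp
      have e4 : (2*K : ℝ) * ((B:ℝ) * r^(n+1)) = (2*K + 1) * ((B:ℝ) * r^n) := by
        calc (2*K : ℝ) * ((B:ℝ) * r^(n+1)) = ((2*K:ℝ) * r) * ((B:ℝ) * r^n) := by
              rw [pow_succ]; ring
          _ = (2*K + 1) * ((B:ℝ) * r^n) := by rw [h2Kr]
      have hfinal : (2*K : ℝ) * ((B:ℝ) * r^(n+1)) ≤ (2*K : ℝ) * ((Sn (n+1)).ncard : ℝ) := by
        rw [e4]
        nlinarith [e1, e2, e3, e5, ih]
      exact le_of_mul_le_mul_left hfinal hK0R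
  -- conclusion : the fire set cannot stabilize
  have htend : Filter.Tendsto (fun n : ℕ => (B:ℝ) * r^n) Filter.atTop Filter.atTop := by
    refine Filter.Tendsto.const_mul_atTop ?_ (tendsto_pow_atTop_atTop_of_one_lt hr1)
    exact_mod_cast Nat.lt_of_lt_of_le Nat.zero_lt_one hB1
  obtain ⟨n, hn⟩ := ((htend.eventually_gt_atTop
    (((fireSet H 1 S0 Wstrat N).ncard : ℝ))).and (Filter.eventually_ge_atTop N)).exists
  obtain ⟨hlt, hnN⟩ := hn
  have hSnX : Sn n ⊆ fireSet H 1 S0 Wstrat N := by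
    rw [hSn]
    intro v hv
    rw [← hstab n hnN]
    exact hv.1
  have hle : (Sn n).ncard ≤ (fireSet H 1 S0 Wstrat N).ncard :=
    Set.ncard_le_ncard hSnX (hXfin N)
  have hleR : ((Sn n).ncard : ℝ) ≤ ((fireSet H 1 S0 Wstrat N).ncard : ℝ) := by
    exact_mod_cast hle
  have := hgrowth n
  linarith


end Firefighter
end
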